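/- arXiv:2602.18113 — 5 statements merged into one kernel-verified Lean document; each statement's English description precedes it below -/
import Mathlib

section
/- (Tracy–Widom-type representation, Theorem 2.4 identity, in conditional form.) Fix α > −1 and an integer m ≥ 1. Let Φ(ξ | s, x) be a complex-valued function of ξ < 0, s ∈ ℝ, x > 0 such that the partial derivatives ∂_ξΦ, ∂ₓΦ, ∂_ξ∂ₓΦ = ∂ₓ∂_ξΦ, ∂ₓ²Φ, and ∂_ξ∂ₓ²Φ = ∂ₓ²∂_ξΦ all exist and are continuous, and such that for every compact X ⊂ (0,∞) there is C > 0 with |Φ(ξ|s,x)| + |∂_ξΦ(ξ|s,x)| + |∂ₓΦ(ξ|s,x)| + |∂_ξ∂ₓΦ(ξ|s,x)| ≤ C·(1 + |ξ|) for all ξ < 0, s ∈ ℝ, x ∈ X. Define p(s,x) := −(4α² − 1)/(8x) + (e^{−iπα}/(2π)) ∫_s^∞ ∫_{−∞}^0 Φ(ξ|u,x)² · ∂_sσ_Φ(ξ|u) dξ du, assume p is differentiable in x, and assume the Schrödinger relation ∂ₓ²Φ(ξ | s, x) = ( ξ + 2·∂ₓp(s,x) )·Φ(ξ | s, x) holds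 for all ξ < 0, s ∈ ℝ, x > 0. Define ℓ(s,x) := −(e^{−iπα}/(2π)) ∫_s^∞ ∫_{−∞}^0 [ Φ(ξ|u,x)·∂ₓ∂_ξΦ(ξ|u,x) − ∂_ξΦ(ξ|u,x)·∂ₓΦ(ξ|u,x) ] · ∂_sσ_Φ(ξ|u) dξ du. Then ℓ is differentiable in x and ∂ₓℓ(s,x) = −p(s,x) − (4α² − 1)/(8x) for all s ∈ ℝ and x > 0. -/
open MeasureTheory

/-- The partial derivative in `s` of the symbol
`σ_Φ(ζ | s) = 1/(1 + exp(−s − (−1)^m ζ^m))`. -/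
noncomputable def dsigmaPhi (m : ℕ) (ξ s : ℝ) : ℝ :=
  Real.exp (-s - (-1 : ℝ) ^ m * ξ ^ m) / (1 + Real.exp (-s - (-1 : ℝ) ^ m * ξ ^ m)) ^ 2

private lemma aux_exp_half : MeasureTheory.IntegrableOn (fun ξ : ℝ => Real.exp (ξ / 2)) (Set.Iio 0) := by
  have h1 : Integrable ((Set.Iic (0:ℝ)).indicator Real.exp) :=
    (integrable_indicator_iff measurableSet_Iic).2 (integrableOn_exp_Iic 0)
  have h2 : Integrable (fun x : ℝ => ((Set.Iic (0:ℝ)).indicator Real.exp) ((1/2) * x)) :=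
    (MeasureTheory.integrable_comp_mul_left_iff _ (by norm_num : (1/2:ℝ) ≠ 0)).2 h1
  have h3 : (fun x : ℝ => ((Set.Iic (0:ℝ)).indicator Real.exp) ((1/2) * x))
      = (Set.Iic (0:ℝ)).indicator (fun x => Real.exp (x/2)) := by
    funext x
    by_cases hx : x ≤ 0
    · rw [Set.indicator_of_mem (show (1/2:ℝ)*x ∈ Set.Iic (0:ℝ) by simp only [Set.mem_Iic]; linarith),
        Set.indicator_of_mem (by simpa using hx)]
      ring_nf
    · rw [Set.indicator_of_notMem (show (1/2:ℝ)*x ∉ Set.Iic (0:ℝ) by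
          simp only [Set.mem_Iic]; push_neg at hx ⊢; linarith),
        Set.indicator_of_notMem (by simpa using hx)]
  apply MeasureTheory.IntegrableOn.mono_set _ Set.Iio_subset_Iic_self
  have := h3 ▸ h2
  exact (integrable_indicator_iff measurableSet_Iic).1 this

private lemma aux_poly (t : ℝ) (ht : 0 ≤ t) : (1 + t) ^ 2 ≤ 16 * Real.exp (t / 2) := by
  have h1 : 1 + t/4 ≤ Real.exp (t/4) := by
    have := Real.add_one_le_exp (t/4); linarith
  have h3 : (1+t)^2 ≤ (4*(1+t/4))^2 := by nlinarith
  have h4 : (1+t/4)^2 ≤ Real.exp (t/4)^2 := by nlinarith [Real.exp_pos (t/4)]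
  have h5 : Real.exp (t/4) ^ 2 = Real.exp (t/2) := by
    rw [sq, ← Real.exp_add]; ring_nf
  nlinarith

private lemma aux_dsigma_le (m : ℕ) (hm : 1 ≤ m) (ξ u : ℝ) (hξ : ξ < 0) :
    dsigmaPhi m ξ u ≤ Real.exp 1 * (Real.exp (-u) * Real.exp ξ) := by
  unfold dsigmaPhi
  have hA : (-1:ℝ)^m * ξ^m = (-ξ)^m := by rw [neg_pow]; ring
  set A := -u - (-1:ℝ)^m * ξ^m with hAdef
  have hpow : -ξ - 1 ≤ (-ξ)^m := by
    rcases le_or_gt (-ξ) 1 with h|h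
    · have : (0:ℝ) ≤ (-ξ)^m := pow_nonneg (by linarith) m
      linarith
    · have := le_self_pow₀ h.le (by omega : m ≠ 0)
      linarith
  have h1 : Real.exp A / (1 + Real.exp A)^2 ≤ Real.exp A := by
    apply div_le_self (Real.exp_pos A).le
    nlinarith [Real.exp_pos A]
  have h2 : Real.exp A ≤ Real.exp (1 - u + ξ) := by
    apply Real.exp_le_exp.2
    rw [hAdef, hA]; linarith
  have h3 : Real.exp (1 - u + ξ) = Real.exp 1 * (Real.exp (-u) * Real.exp ξ) := by
    rw [← Real.exp_add, ← Real.exp_add]; ring_nf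
  linarith

/-- Tracy–Widom-type representation (Theorem 2.4, identity part), conditional form:
`∂ₓ log L_α^{(Bes)}(s,x) = −p(s,x) − (4α²−1)/(8x)`. -/
theorem statement2 (α : ℝ) (hα : -1 < α) (m : ℕ) (hm : 1 ≤ m)
    (Φ Φξ Φx Φξx Φxx Φξxx : ℝ → ℝ → ℝ → ℂ)
    -- continuity of Φ and of all the listed partial derivatives
    (hcΦ : ContinuousOn (fun p : ℝ × ℝ × ℝ => Φ p.1 p.2.1 p.2.2)
      {p : ℝ × ℝ × ℝ | p.1 < 0 ∧ 0 < p.2.2})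
    (hcΦξ : ContinuousOn (fun p : ℝ × ℝ × ℝ => Φξ p.1 p.2.1 p.2.2)
      {p : ℝ × ℝ × ℝ | p.1 < 0 ∧ 0 < p.2.2})
    (hcΦx : ContinuousOn (fun p : ℝ × ℝ × ℝ => Φx p.1 p.2.1 p.2.2)
      {p : ℝ × ℝ × ℝ | p.1 < 0 ∧ 0 < p.2.2})
    (hcΦξx : ContinuousOn (fun p : ℝ × ℝ × ℝ => Φξx p.1 p.2.1 p.2.2)
      {p : ℝ × ℝ × ℝ | p.1 < 0 ∧ 0 < p.2.2})
    (hcΦxx : ContinuousOn (fun p : ℝ × ℝ × ℝ => Φxx p.1 p.2.1 p.2.2)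
      {p : ℝ × ℝ × ℝ | p.1 < 0 ∧ 0 < p.2.2})
    (hcΦξxx : ContinuousOn (fun p : ℝ × ℝ × ℝ => Φξxx p.1 p.2.1 p.2.2)
      {p : ℝ × ℝ × ℝ | p.1 < 0 ∧ 0 < p.2.2})
    -- the partial derivatives exist, and the mixed ones coincide
    (hd : ∀ ξ : ℝ, ξ < 0 → ∀ s x : ℝ, 0 < x →
      HasDerivAt (fun ξ' => Φ ξ' s x) (Φξ ξ s x) ξ ∧
      HasDerivAt (fun y => Φ ξ s y) (Φx ξ s x) x ∧
      HasDerivAt (fun ξ' => Φx ξ' s x) (Φξx ξ s x) ξ ∧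
      HasDerivAt (fun y => Φξ ξ s y) (Φξx ξ s x) x ∧
      HasDerivAt (fun y => Φx ξ s y) (Φxx ξ s x) x ∧
      HasDerivAt (fun ξ' => Φxx ξ' s x) (Φξxx ξ s x) ξ ∧
      HasDerivAt (fun y => Φξx ξ s y) (Φξxx ξ s x) x)
    -- growth bound, uniform for x in compact subsets of (0,∞)
    (hgrowth : ∀ X : Set ℝ, IsCompact X → X ⊆ Set.Ioi 0 → ∃ C : ℝ, 0 < C ∧
      ∀ ξ : ℝ, ξ < 0 → ∀ s : ℝ, ∀ x ∈ X,
        ‖Φ ξ s x‖ + ‖Φξ ξ s x‖ + ‖Φx ξ s x‖ +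
          ‖Φξx ξ s x‖ ≤ C * (1 + |ξ|))
    -- the double integrals defining p and ℓ converge
    (hintp : ∀ s x : ℝ, 0 < x →
      IntegrableOn (fun q : ℝ × ℝ => Φ q.2 q.1 x ^ 2 * ((dsigmaPhi m q.2 q.1 : ℝ) : ℂ))
        (Set.Ioi s ×ˢ Set.Iio (0 : ℝ)))
    (hintl : ∀ s x : ℝ, 0 < x →
      IntegrableOn (fun q : ℝ × ℝ =>
          (Φ q.2 q.1 x * Φξx q.2 q.1 x - Φξ q.2 q.1 x * Φx q.2 q.1 x) *
            ((dsigmaPhi m q.2 q.1 : ℝ) : ℂ))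
        (Set.Ioi s ×ˢ Set.Iio (0 : ℝ)))
    -- definition of p, differentiability of p in x, and the Schrödinger relation
    (p px : ℝ → ℝ → ℂ)
    (hp : ∀ s x : ℝ, 0 < x → p s x =
      -(((4 * α ^ 2 - 1) / (8 * x) : ℝ) : ℂ) +
        Complex.exp (-((Real.pi * α : ℝ) : ℂ) * Complex.I) / (2 * ((Real.pi : ℝ) : ℂ)) *
          ∫ q in Set.Ioi s ×ˢ Set.Iio (0 : ℝ),
            Φ q.2 q.1 x ^ 2 * ((dsigmaPhi m q.2 q.1 : ℝ) : ℂ))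
    (hpx : ∀ s x : ℝ, 0 < x → HasDerivAt (fun y => p s y) (px s x) x)
    (hschr : ∀ ξ : ℝ, ξ < 0 → ∀ s x : ℝ, 0 < x →
      Φxx ξ s x = ((ξ : ℂ) + 2 * px s x) * Φ ξ s x) :
    -- conclusion: ℓ is differentiable in x with ∂ₓℓ = −p − (4α²−1)/(8x)
    ∀ s x : ℝ, 0 < x →
      HasDerivAt (fun y =>
          -(Complex.exp (-((Real.pi * α : ℝ) : ℂ) * Complex.I) / (2 * ((Real.pi : ℝ) : ℂ))) *
            ∫ q in Set.Ioi s ×ˢ Set.Iio (0 : ℝ),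
              (Φ q.2 q.1 y * Φξx q.2 q.1 y - Φξ q.2 q.1 y * Φx q.2 q.1 y) *
                ((dsigmaPhi m q.2 q.1 : ℝ) : ℂ))
        (-(p s x) - (((4 * α ^ 2 - 1) / (8 * x) : ℝ) : ℂ)) x :=  by
  intro s x hx
  have hSmeas : MeasurableSet (Set.Ioi s ×ˢ Set.Iio (0:ℝ)) :=
    measurableSet_Ioi.prod measurableSet_Iio
  obtain ⟨C, hC0, hCb⟩ := hgrowth (Set.Icc (x/2) (x + x/2)) isCompact_Icc
    (fun y hy => lt_of_lt_of_le (by linarith) hy.1)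
  have hcont : ∀ (G : ℝ → ℝ → ℝ → ℂ),
      ContinuousOn (fun p : ℝ × ℝ × ℝ => G p.1 p.2.1 p.2.2)
        {p : ℝ × ℝ × ℝ | p.1 < 0 ∧ 0 < p.2.2} →
      ∀ y : ℝ, 0 < y →
        ContinuousOn (fun q : ℝ × ℝ => G q.2 q.1 y) (Set.Ioi s ×ˢ Set.Iio (0:ℝ)) := by
    intro G hG y hy
    have hmap : Set.MapsTo (fun q : ℝ × ℝ => (q.2, q.1, y)) (Set.Ioi s ×ˢ Set.Iio (0:ℝ))
        {p : ℝ × ℝ × ℝ | p.1 < 0 ∧ 0 < p.2.2} := fun q hq => ⟨hq.2, hy⟩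
    exact hG.comp (Continuous.continuousOn (by fun_prop)) hmap
  have hσc : Continuous (fun q : ℝ × ℝ => ((dsigmaPhi m q.2 q.1 : ℝ) : ℂ)) := by
    apply Complex.continuous_ofReal.comp
    unfold dsigmaPhi
    have he : Continuous (fun q : ℝ × ℝ => Real.exp (-q.1 - (-1:ℝ)^m * q.2^m)) := by fun_prop
    exact he.div ((continuous_const.add he).pow 2) (fun q => by positivity)
  have hσ0 : ∀ q : ℝ × ℝ, 0 ≤ dsigmaPhi m q.2 q.1 := fun q => by
    unfold dsigmaPhi; positivity
  have hF_meas : ∀ᶠ y in nhds x, AEStronglyMeasurable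
      (fun q : ℝ × ℝ => (Φ q.2 q.1 y * Φξx q.2 q.1 y - Φξ q.2 q.1 y * Φx q.2 q.1 y) *
        ((dsigmaPhi m q.2 q.1 : ℝ) : ℂ)) (volume.restrict (Set.Ioi s ×ˢ Set.Iio (0:ℝ))) := by
    filter_upwards [IsOpen.mem_nhds isOpen_Ioi hx] with y hy
    exact (((((hcont Φ hcΦ y hy).mul (hcont Φξx hcΦξx y hy)).sub
      ((hcont Φξ hcΦξ y hy).mul (hcont Φx hcΦx y hy))).mul
        hσc.continuousOn).aestronglyMeasurable hSmeas)
  have hF'_meas : AEStronglyMeasurable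
      (fun q : ℝ × ℝ => Φ q.2 q.1 x ^ 2 * ((dsigmaPhi m q.2 q.1 : ℝ) : ℂ))
      (volume.restrict (Set.Ioi s ×ˢ Set.Iio (0:ℝ))) :=
    (((hcont Φ hcΦ x hx).pow 2).mul hσc.continuousOn).aestronglyMeasurable hSmeas
  have hball : ∀ y ∈ Metric.ball x (x/2), 0 < y ∧ y ∈ Set.Icc (x/2) (x + x/2) := by
    intro y hy
    rw [Metric.mem_ball, Real.dist_eq, abs_sub_lt_iff] at hy
    refine ⟨by linarith [hy.1, hy.2], by constructor <;> linarith [hy.1, hy.2]⟩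
  have h_bound : ∀ᵐ q ∂(volume.restrict (Set.Ioi s ×ˢ Set.Iio (0:ℝ))),
      ∀ y ∈ Metric.ball x (x/2),
        ‖Φ q.2 q.1 y ^ 2 * ((dsigmaPhi m q.2 q.1 : ℝ) : ℂ)‖ ≤
          (16 * Real.exp 1 * C^2 * Real.exp (-q.1)) * Real.exp (q.2 / 2) := by
    filter_upwards [ae_restrict_mem hSmeas] with q hq
    intro y hy
    obtain ⟨hy0, hyX⟩ := hball y hy
    have hq2 : q.2 < 0 := hq.2
    have hΦb : ‖Φ q.2 q.1 y‖ ≤ C * (1 + |q.2|) := by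
      have h := hCb q.2 hq2 q.1 y hyX
      have n1 := norm_nonneg (Φξ q.2 q.1 y)
      have n2 := norm_nonneg (Φx q.2 q.1 y)
      have n3 := norm_nonneg (Φξx q.2 q.1 y)
      linarith
    have hnorm : ‖Φ q.2 q.1 y ^ 2 * ((dsigmaPhi m q.2 q.1 : ℝ) : ℂ)‖ =
        ‖Φ q.2 q.1 y‖^2 * dsigmaPhi m q.2 q.1 := by
      rw [norm_mul, norm_pow, Complex.norm_real, Real.norm_of_nonneg (hσ0 q)]
    rw [hnorm]
    have hσle := aux_dsigma_le m hm q.2 q.1 hq2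
    have habs : |q.2| = -q.2 := abs_of_neg hq2
    have step1 : ‖Φ q.2 q.1 y‖^2 * dsigmaPhi m q.2 q.1 ≤
        (C * (1 + |q.2|))^2 * (Real.exp 1 * (Real.exp (-q.1) * Real.exp q.2)) :=
      mul_le_mul (pow_le_pow_left₀ (norm_nonneg _) hΦb 2) hσle (hσ0 q) (by positivity)
    have step2 : (C * (1 + |q.2|))^2 ≤ C^2 * (16 * Real.exp (-q.2 / 2)) := by
      rw [mul_pow, habs]
      have := aux_poly (-q.2) (by linarith)
      nlinarith [sq_nonneg C]
    have hee : Real.exp (-q.2/2) * Real.exp q.2 = Real.exp (q.2/2) := by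
      rw [← Real.exp_add]; ring_nf
    calc ‖Φ q.2 q.1 y‖^2 * dsigmaPhi m q.2 q.1
        ≤ (C * (1 + |q.2|))^2 * (Real.exp 1 * (Real.exp (-q.1) * Real.exp q.2)) := step1
      _ ≤ (C^2 * (16 * Real.exp (-q.2/2))) * (Real.exp 1 * (Real.exp (-q.1) * Real.exp q.2)) :=
          mul_le_mul_of_nonneg_right step2 (by positivity)
      _ = (16 * Real.exp 1 * C^2 * Real.exp (-q.1)) * (Real.exp (-q.2/2) * Real.exp q.2) := by
          ring
      _ = (16 * Real.exp 1 * C^2 * Real.exp (-q.1)) * Real.exp (q.2/2) := by rw [hee]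
  have bound_int : Integrable (fun q : ℝ × ℝ =>
      (16 * Real.exp 1 * C^2 * Real.exp (-q.1)) * Real.exp (q.2 / 2))
      (volume.restrict (Set.Ioi s ×ˢ Set.Iio (0:ℝ))) := by
    have hrw : (volume : Measure (ℝ × ℝ)).restrict (Set.Ioi s ×ˢ Set.Iio (0:ℝ)) =
        ((volume : Measure ℝ).restrict (Set.Ioi s)).prod
          ((volume : Measure ℝ).restrict (Set.Iio 0)) := by
      rw [Measure.volume_eq_prod, Measure.prod_restrict]
    rw [hrw]
    have h := exp_neg_integrableOn_Ioi s (zero_lt_one)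
    have h' : IntegrableOn (fun u : ℝ => Real.exp (-u)) (Set.Ioi s) := by simpa using h
    exact Integrable.mul_prod (f := fun u : ℝ => 16 * Real.exp 1 * C ^ 2 * Real.exp (-u))
      (g := fun ξ : ℝ => Real.exp (ξ / 2)) (h'.const_mul (16 * Real.exp 1 * C ^ 2)) aux_exp_half
  have h_diff : ∀ᵐ q ∂(volume.restrict (Set.Ioi s ×ˢ Set.Iio (0:ℝ))),
      ∀ y ∈ Metric.ball x (x/2),
        HasDerivAt (fun y' => (Φ q.2 q.1 y' * Φξx q.2 q.1 y' - Φξ q.2 q.1 y' * Φx q.2 q.1 y') *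
            ((dsigmaPhi m q.2 q.1 : ℝ) : ℂ))
          (Φ q.2 q.1 y ^ 2 * ((dsigmaPhi m q.2 q.1 : ℝ) : ℂ)) y := by
    filter_upwards [ae_restrict_mem hSmeas] with q hq
    intro y hy
    have hq2 : q.2 < 0 := hq.2
    have hy0 : 0 < y := (hball y hy).1
    obtain ⟨h1, h2, h3, h4, h5, h6, h7⟩ := hd q.2 hq2 q.1 y hy0
    have hlin : HasDerivAt (fun ξ' : ℝ => ((ξ' : ℂ) + 2 * px q.1 y)) 1 q.2 := by
      simpa using (Complex.ofRealCLM.hasDerivAt (x := q.2)).add_const (2 * px q.1 y)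
    have hgd : HasDerivAt (fun ξ' : ℝ => ((ξ' : ℂ) + 2 * px q.1 y) * Φ ξ' q.1 y)
        (1 * Φ q.2 q.1 y + ((q.2 : ℂ) + 2 * px q.1 y) * Φξ q.2 q.1 y) q.2 := hlin.mul h1
    have heq : (fun ξ' : ℝ => Φxx ξ' q.1 y) =ᶠ[nhds q.2]
        (fun ξ' : ℝ => ((ξ' : ℂ) + 2 * px q.1 y) * Φ ξ' q.1 y) := by
      filter_upwards [IsOpen.mem_nhds isOpen_Iio hq2] with ξ' hξ'
      exact hschr ξ' hξ' q.1 y hy0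
    have h6' : HasDerivAt (fun ξ' : ℝ => Φxx ξ' q.1 y)
        (1 * Φ q.2 q.1 y + ((q.2 : ℂ) + 2 * px q.1 y) * Φξ q.2 q.1 y) q.2 :=
      hgd.congr_of_eventuallyEq heq
    have hΦξxx : Φξxx q.2 q.1 y =
        1 * Φ q.2 q.1 y + ((q.2 : ℂ) + 2 * px q.1 y) * Φξ q.2 q.1 y := h6.unique h6'
    have hΦxx : Φxx q.2 q.1 y = ((q.2 : ℂ) + 2 * px q.1 y) * Φ q.2 q.1 y :=
      hschr q.2 hq2 q.1 y hy0
    have hW : HasDerivAt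
        (fun y' => Φ q.2 q.1 y' * Φξx q.2 q.1 y' - Φξ q.2 q.1 y' * Φx q.2 q.1 y')
        ((Φx q.2 q.1 y * Φξx q.2 q.1 y + Φ q.2 q.1 y * Φξxx q.2 q.1 y) -
          (Φξx q.2 q.1 y * Φx q.2 q.1 y + Φξ q.2 q.1 y * Φxx q.2 q.1 y)) y :=
      (h2.mul h7).sub (h4.mul h5)
    have hWσ := hW.mul_const ((dsigmaPhi m q.2 q.1 : ℝ) : ℂ)
    refine hWσ.congr_deriv ?_
    rw [hΦξxx, hΦxx]; ring
  have key := (hasDerivAt_integral_of_dominated_loc_of_deriv_le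
    (F := fun y (q : ℝ × ℝ) =>
      (Φ q.2 q.1 y * Φξx q.2 q.1 y - Φξ q.2 q.1 y * Φx q.2 q.1 y) *
        ((dsigmaPhi m q.2 q.1 : ℝ) : ℂ))
    (F' := fun y (q : ℝ × ℝ) => Φ q.2 q.1 y ^ 2 * ((dsigmaPhi m q.2 q.1 : ℝ) : ℂ))
    (Metric.ball_mem_nhds x (half_pos hx)) hF_meas (hintl s x hx) hF'_meas h_bound bound_int h_diff).2
  have key2 := key.const_mul
    (-(Complex.exp (-((Real.pi * α : ℝ) : ℂ) * Complex.I) / (2 * ((Real.pi : ℝ) : ℂ))))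
  have hval : -(p s x) - (((4 * α ^ 2 - 1) / (8 * x) : ℝ) : ℂ) =
      -(Complex.exp (-((Real.pi * α : ℝ) : ℂ) * Complex.I) / (2 * ((Real.pi : ℝ) : ℂ))) *
        ∫ q in Set.Ioi s ×ˢ Set.Iio (0:ℝ),
          Φ q.2 q.1 x ^ 2 * ((dsigmaPhi m q.2 q.1 : ℝ) : ℂ) := by
    linear_combination -(hp s x hx)
  rw [hval]
  exact key2
end

section
/- (Large-s asymptotics of F_β, Proposition B.1(i), asymptotic part.) Let β > −1 and s₀ > 0. Then there is a constant C > 0 such that for all s ≥ s₀: | F_β(s) − Γ(β+1)·e^{−s} | ≤ C·e^{−2s}. -/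
open MeasureTheory

lemma log1p_bound {s₀ y : ℝ} (hs₀ : 0 < s₀) (hy0 : 0 < y) (hy : y ≤ Real.exp (-s₀)) :
    |Real.log (1 + y) - y| ≤ (1 - Real.exp (-s₀))⁻¹ * y ^ 2 := by
  have hε : Real.exp (-s₀) < 1 := by
    rw [Real.exp_lt_one_iff]; linarith
  have hy1 : y < 1 := lt_of_le_of_lt hy hε
  have h := Real.abs_log_sub_add_sum_range_le (x := -y)
    (by rw [abs_neg, abs_of_pos hy0]; exact hy1) 1
  simp only [Finset.sum_range_one, pow_one, abs_neg, abs_of_pos hy0, Nat.cast_zero,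
    zero_add, div_one, sub_neg_eq_add] at h
  rw [show (1 : ℕ) + 1 = 2 by norm_num] at h
  have h2 : |Real.log (1 + y) - y| ≤ y ^ 2 / (1 - y) := by
    rw [abs_sub_comm, show y - Real.log (1 + y) = -(-y + Real.log (1 + y)) by ring, abs_neg]
    exact h
  refine h2.trans ?_
  rw [div_eq_inv_mul]
  have h1 : 0 < 1 - y := by linarith
  have h2' : 0 < 1 - Real.exp (-s₀) := by linarith
  have : (1 - y)⁻¹ ≤ (1 - Real.exp (-s₀))⁻¹ := by
    apply inv_anti₀ h2'; linarith
  nlinarith [sq_nonneg y]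

lemma intOn_rpow_exp {β : ℝ} (hβ : -1 < β) {a : ℝ} (ha : 0 < a) :
    IntegrableOn (fun x : ℝ => x ^ β * Real.exp (-(a * x))) (Set.Ioi 0) := by
  have := integrableOn_rpow_mul_exp_neg_mul_rpow (p := 1) hβ one_pos ha
  refine this.congr_fun (fun x _ => ?_) measurableSet_Ioi
  beta_reduce
  rw [Real.rpow_one, neg_mul]

lemma val_rpow_exp {β : ℝ} (hβ : -1 < β) {a : ℝ} (ha : 0 < a) :
    ∫ x in Set.Ioi (0:ℝ), x ^ β * Real.exp (-(a * x))
      = (1 / a) ^ (β + 1) * Real.Gamma (β + 1) := by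
  have := Real.integral_rpow_mul_exp_neg_mul_Ioi (a := β + 1) (r := a) (by linarith) ha
  simpa using this

/-- `F_β(s) := ∫₀^∞ x^β log(1 + e^{−s−x}) dx`. -/
noncomputable def Fbeta (β s : ℝ) : ℝ :=
  ∫ x in Set.Ioi (0 : ℝ), x ^ β * Real.log (1 + Real.exp (-s - x))

/-- Large-`s` asymptotics of `F_β` (Proposition B.1(i), asymptotic part). -/
theorem statement6 (β s₀ : ℝ) (hβ : -1 < β) (hs₀ : 0 < s₀) :
    ∃ C : ℝ, 0 < C ∧ ∀ s : ℝ, s₀ ≤ s →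
      |Fbeta β s - Real.Gamma (β + 1) * Real.exp (-s)| ≤ C * Real.exp (-2 * s) := by
  have hε : Real.exp (-s₀) < 1 := by rw [Real.exp_lt_one_iff]; linarith
  have hD0 : (0:ℝ) < (1 - Real.exp (-s₀))⁻¹ := by
    rw [inv_pos]; linarith
  have hΓ : 0 < Real.Gamma (β + 1) := Real.Gamma_pos_of_pos (by linarith)
  refine ⟨(1 - Real.exp (-s₀))⁻¹ * ((1/2) ^ (β + 1) * Real.Gamma (β + 1)),
    mul_pos hD0 (mul_pos (Real.rpow_pos_of_pos (by norm_num) _) hΓ), fun s hs => ?_⟩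
  have heq : ∀ x : ℝ, x ^ β * Real.exp (-s - x)
      = Real.exp (-s) * (x ^ β * Real.exp (-(1 * x))) := by
    intro x; rw [show -s - x = -s + -(1 * x) by ring, Real.exp_add]; ring
  -- integrability of h := x^β e^{-s-x}
  have hh : IntegrableOn (fun x : ℝ => x ^ β * Real.exp (-s - x)) (Set.Ioi 0) := by
    have h1 : IntegrableOn (fun x : ℝ =>
        Real.exp (-s) * (x ^ β * Real.exp (-(1 * x)))) (Set.Ioi 0) :=
      (intOn_rpow_exp hβ one_pos).const_mul (Real.exp (-s))
    exact h1.congr_fun (fun x _ => (heq x).symm) measurableSet_Ioi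
  -- value of ∫ h
  have hval : ∫ x in Set.Ioi (0:ℝ), x ^ β * Real.exp (-s - x)
      = Real.Gamma (β + 1) * Real.exp (-s) := by
    rw [MeasureTheory.setIntegral_congr_fun measurableSet_Ioi (fun x _ => heq x),
      MeasureTheory.integral_const_mul _ _, val_rpow_exp hβ one_pos]
    simp [Real.one_rpow]; ring
  -- integrability of g
  have hg : IntegrableOn (fun x : ℝ =>
      x ^ β * Real.log (1 + Real.exp (-s - x))) (Set.Ioi 0) := by
    refine hh.integrable.mono ?_ ?_
    · apply AEStronglyMeasurable.restrict
      apply Measurable.aestronglyMeasurable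
      exact (measurable_id.pow_const β).mul (Real.measurable_log.comp
        (measurable_const.add ((measurable_const.sub measurable_id).exp)))
    · refine (ae_restrict_iff' measurableSet_Ioi).mpr (ae_of_all _ fun x hx => ?_)
      have hx0 : (0:ℝ) < x := hx
      have hy0 : (0:ℝ) < Real.exp (-s - x) := Real.exp_pos _
      have hlog0 : 0 ≤ Real.log (1 + Real.exp (-s - x)) :=
        Real.log_nonneg (by linarith)
      have hlog1 : Real.log (1 + Real.exp (-s - x)) ≤ Real.exp (-s - x) := by
        have := Real.log_le_sub_one_of_pos (show (0:ℝ) < 1 + Real.exp (-s - x) by linarith)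
        linarith
      have hxb : (0:ℝ) ≤ x ^ β := Real.rpow_nonneg hx0.le _
      simp only [Real.norm_eq_abs, abs_mul, abs_of_nonneg hxb, abs_of_nonneg hlog0,
        abs_of_pos hy0]
      exact mul_le_mul_of_nonneg_left hlog1 hxb
  -- main estimate
  have hsub : Fbeta β s - Real.Gamma (β + 1) * Real.exp (-s)
      = ∫ x in Set.Ioi (0:ℝ),
          (x ^ β * Real.log (1 + Real.exp (-s - x)) - x ^ β * Real.exp (-s - x)) := by
    rw [MeasureTheory.integral_sub hg hh, ← hval]; rfl
  rw [hsub]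
  -- bound function
  have hbint : Integrable (fun x : ℝ =>
      ((1 - Real.exp (-s₀))⁻¹ * Real.exp (-2 * s)) * (x ^ β * Real.exp (-(2 * x))))
      (volume.restrict (Set.Ioi 0)) :=
    (intOn_rpow_exp hβ two_pos).const_mul _
  have hbound : ∀ x ∈ Set.Ioi (0:ℝ),
      ‖x ^ β * Real.log (1 + Real.exp (-s - x)) - x ^ β * Real.exp (-s - x)‖
      ≤ ((1 - Real.exp (-s₀))⁻¹ * Real.exp (-2 * s)) * (x ^ β * Real.exp (-(2 * x))) := by
    intro x hx
    have hx0 : (0:ℝ) < x := hx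
    have hxb : (0:ℝ) ≤ x ^ β := Real.rpow_nonneg hx0.le _
    have hy0 : (0:ℝ) < Real.exp (-s - x) := Real.exp_pos _
    have hyle : Real.exp (-s - x) ≤ Real.exp (-s₀) :=
      Real.exp_le_exp.mpr (by linarith)
    have hkey := log1p_bound hs₀ hy0 hyle
    have hsq : Real.exp (-s - x) ^ 2 = Real.exp (-2 * s) * Real.exp (-(2 * x)) := by
      rw [← Real.exp_add, ← Real.exp_nat_mul]
      norm_num; ring_nf
    calc ‖x ^ β * Real.log (1 + Real.exp (-s - x)) - x ^ β * Real.exp (-s - x)‖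
        = x ^ β * |Real.log (1 + Real.exp (-s - x)) - Real.exp (-s - x)| := by
          rw [Real.norm_eq_abs, ← mul_sub, abs_mul, abs_of_nonneg hxb]
      _ ≤ x ^ β * ((1 - Real.exp (-s₀))⁻¹ * Real.exp (-s - x) ^ 2) :=
          mul_le_mul_of_nonneg_left hkey hxb
      _ = ((1 - Real.exp (-s₀))⁻¹ * Real.exp (-2 * s)) * (x ^ β * Real.exp (-(2 * x))) := by
          rw [hsq]; ring
  have := MeasureTheory.norm_integral_le_of_norm_le hbint
    ((ae_restrict_iff' measurableSet_Ioi).mpr (ae_of_all _ hbound))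
  rw [Real.norm_eq_abs] at this
  refine this.trans ?_
  rw [MeasureTheory.integral_const_mul _ _, val_rpow_exp hβ two_pos]
  have he2 : (0:ℝ) < Real.exp (-2 * s) := Real.exp_pos _
  rw [show (2:ℝ) = ((2:ℝ)) from rfl]
  ring_nf
  nlinarith [Real.rpow_pos_of_pos (show (0:ℝ) < 1/2 by norm_num) (β+1)]
end

section
/- (Model Laplace-type estimate, equation (eq:estLogint1) in the proof of Proposition B.1.) Let β > −1, δ > 0 and s₀ ∈ ℝ. Then there exist η > 0, C > 0 and T > 0 such that for all t ≥ T and all s ≥ s₀: | ∫₀^δ x^β · log(1 + e^{−s − t·x}) dx − t^{−(β+1)}·F_β(s) | ≤ C·e^{−η·t}. -/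
open MeasureTheory

lemma int_rpow_exp_base {β : ℝ} (hβ : -1 < β) :
    IntegrableOn (fun x : ℝ => x ^ β * Real.exp (-x)) (Set.Ioi 0) := by
  have h1 := Real.GammaIntegral_convergent (show 0 < β + 1 by linarith)
  refine h1.congr_fun (fun x hx => ?_) measurableSet_Ioi
  simp [mul_comm]

lemma int_rpow_exp {β : ℝ} (hβ : -1 < β) {c : ℝ} (hc : 0 < c) :
    IntegrableOn (fun x : ℝ => x ^ β * Real.exp (-(c * x))) (Set.Ioi 0) := by
  have h1 : IntegrableOn (fun x : ℝ => x ^ β * Real.exp (-x)) (Set.Ioi (c * 0)) := by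
    simpa using int_rpow_exp_base hβ
  have h2 := (integrableOn_Ioi_comp_mul_left_iff
      (fun x : ℝ => x ^ β * Real.exp (-x)) 0 hc).2 h1
  have h3 := h2.const_mul (c ^ (-β))
  refine h3.congr ?_
  filter_upwards [ae_restrict_mem measurableSet_Ioi] with x hx
  have hx0 : (0:ℝ) < x := hx
  rw [Real.mul_rpow hc.le hx0.le, Real.rpow_neg hc.le]
  field_simp

lemma g_meas (β s t : ℝ) :
    AEStronglyMeasurable (fun x : ℝ => x ^ β * Real.log (1 + Real.exp (-s - t * x)))
      (volume.restrict (Set.Ioi 0)) := by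
  apply Measurable.aestronglyMeasurable
  have h1 : Measurable fun x : ℝ => x ^ β := by fun_prop
  have h2 : Measurable fun x : ℝ => Real.log (1 + Real.exp (-s - t * x)) :=
    (Real.measurable_exp.comp (measurable_const.sub (measurable_id.const_mul t))).const_add 1
      |>.log
  exact h1.mul h2

lemma g_nonneg {β : ℝ} (s t : ℝ) {x : ℝ} (hx : 0 < x) :
    0 ≤ x ^ β * Real.log (1 + Real.exp (-s - t * x)) :=
  mul_nonneg (Real.rpow_nonneg hx.le β) (Real.log_nonneg (by nlinarith [Real.exp_pos (-s - t*x)]))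

lemma log_le (u : ℝ) : Real.log (1 + Real.exp u) ≤ Real.exp u := by
  have h := Real.log_le_sub_one_of_pos (show (0:ℝ) < 1 + Real.exp u by positivity)
  linarith

lemma g_integrable {β : ℝ} (hβ : -1 < β) (s : ℝ) {t : ℝ} (ht : 0 < t) :
    IntegrableOn (fun x : ℝ => x ^ β * Real.log (1 + Real.exp (-s - t * x))) (Set.Ioi 0) := by
  refine Integrable.mono' ((int_rpow_exp hβ ht).const_mul (Real.exp (-s))) (g_meas β s t) ?_
  filter_upwards [ae_restrict_mem measurableSet_Ioi] with x hx
  have hx0 : (0:ℝ) < x := hx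
  rw [Real.norm_eq_abs, abs_of_nonneg (g_nonneg s t hx0)]
  have h1 : Real.log (1 + Real.exp (-s - t * x)) ≤ Real.exp (-s) * Real.exp (-(t * x)) := by
    rw [← Real.exp_add]
    have := log_le (-s - t * x)
    simpa [sub_eq_add_neg] using this
  calc x ^ β * Real.log (1 + Real.exp (-s - t * x))
      ≤ x ^ β * (Real.exp (-s) * Real.exp (-(t * x))) := by
        exact mul_le_mul_of_nonneg_left h1 (Real.rpow_nonneg hx0.le β)
    _ = Real.exp (-s) * (x ^ β * Real.exp (-(t * x))) := by ring

lemma key_identity {β : ℝ} (hβ : -1 < β) (s : ℝ) {t : ℝ} (ht : 0 < t) :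
    (∫ x in Set.Ioi (0:ℝ), x ^ β * Real.log (1 + Real.exp (-s - t * x)))
      = t ^ (-(β + 1)) * Fbeta β s := by
  have h := integral_comp_mul_left_Ioi
    (fun y : ℝ => y ^ β * Real.log (1 + Real.exp (-s - y))) 0 ht
  rw [mul_zero] at h
  have heq : (∫ x in Set.Ioi (0:ℝ), (t * x) ^ β * Real.log (1 + Real.exp (-s - t * x)))
      = t ^ β * ∫ x in Set.Ioi (0:ℝ), x ^ β * Real.log (1 + Real.exp (-s - t * x)) := by
    rw [← integral_const_mul]
    refine setIntegral_congr_fun measurableSet_Ioi (fun x hx => ?_)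
    have hx0 : (0:ℝ) < x := hx
    rw [Real.mul_rpow ht.le hx0.le]; ring
  rw [heq] at h
  have htβ : (0:ℝ) < t ^ β := Real.rpow_pos_of_pos ht β
  have : (∫ x in Set.Ioi (0:ℝ), x ^ β * Real.log (1 + Real.exp (-s - t * x)))
      = (t ^ β)⁻¹ * (t⁻¹ * Fbeta β s) := by
    rw [Fbeta]
    rw [smul_eq_mul] at h
    field_simp at h ⊢
    linarith [h]
  rw [this, Real.rpow_neg ht.le, Real.rpow_add ht, Real.rpow_one, mul_inv]
  ring

/-- Model Laplace-type estimate (equation (eq:estLogint1) in the proof of Proposition B.1). -/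
theorem statement7 (β δ s₀ : ℝ) (hβ : -1 < β) (hδ : 0 < δ) :
    ∃ η C T : ℝ, 0 < η ∧ 0 < C ∧ 0 < T ∧
      ∀ t : ℝ, T ≤ t → ∀ s : ℝ, s₀ ≤ s →
        |(∫ x in Set.Ioo (0 : ℝ) δ, x ^ β * Real.log (1 + Real.exp (-s - t * x))) -
            t ^ (-(β + 1)) * Fbeta β s|
          ≤ C * Real.exp (-η * t) := by
  set K0 : ℝ := ∫ x in Set.Ioi (0:ℝ), x ^ β * Real.exp (-x) with hK0def
  have hK0 : 0 ≤ K0 :=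
    setIntegral_nonneg measurableSet_Ioi fun x hx =>
      mul_nonneg (Real.rpow_nonneg (le_of_lt hx) β) (Real.exp_pos _).le
  refine ⟨δ, Real.exp (δ - s₀) * K0 + 1, 1, hδ, by positivity, one_pos, ?_⟩
  intro t ht s hs
  have ht0 : (0:ℝ) < t := lt_of_lt_of_le one_pos ht
  have hIciSub : Set.Ici δ ⊆ Set.Ioi (0:ℝ) := fun x hx => lt_of_lt_of_le hδ hx
  have hint := g_integrable hβ s ht0
  have hIoo : IntegrableOn (fun x : ℝ => x ^ β * Real.log (1 + Real.exp (-s - t * x)))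
      (Set.Ioo 0 δ) := hint.mono_set Set.Ioo_subset_Ioi_self
  have hIci : IntegrableOn (fun x : ℝ => x ^ β * Real.log (1 + Real.exp (-s - t * x)))
      (Set.Ici δ) := hint.mono_set hIciSub
  have hdisj : Disjoint (Set.Ioo (0:ℝ) δ) (Set.Ici δ) :=
    Set.disjoint_left.2 fun x hx hx' => absurd hx' (not_le.2 hx.2)
  have hsplit : (∫ x in Set.Ioi (0:ℝ), x ^ β * Real.log (1 + Real.exp (-s - t * x)))
      = (∫ x in Set.Ioo (0:ℝ) δ, x ^ β * Real.log (1 + Real.exp (-s - t * x)))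
        + ∫ x in Set.Ici δ, x ^ β * Real.log (1 + Real.exp (-s - t * x)) := by
    rw [← setIntegral_union hdisj measurableSet_Ici hIoo hIci, Set.Ioo_union_Ici_eq_Ioi hδ]
  have hkey := key_identity hβ s ht0
  have habs : |(∫ x in Set.Ioo (0 : ℝ) δ, x ^ β * Real.log (1 + Real.exp (-s - t * x))) -
      t ^ (-(β + 1)) * Fbeta β s|
      = ∫ x in Set.Ici δ, x ^ β * Real.log (1 + Real.exp (-s - t * x)) := by
    rw [← hkey, hsplit]
    rw [show (∫ x in Set.Ioo (0:ℝ) δ, x ^ β * Real.log (1 + Real.exp (-s - t * x))) -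
        ((∫ x in Set.Ioo (0:ℝ) δ, x ^ β * Real.log (1 + Real.exp (-s - t * x)))
          + ∫ x in Set.Ici δ, x ^ β * Real.log (1 + Real.exp (-s - t * x)))
        = -(∫ x in Set.Ici δ, x ^ β * Real.log (1 + Real.exp (-s - t * x))) by ring]
    rw [abs_neg, abs_of_nonneg]
    exact setIntegral_nonneg measurableSet_Ici fun x hx => g_nonneg s t (hIciSub hx)
  rw [habs]
  have hbase : IntegrableOn (fun x : ℝ => x ^ β * Real.exp (-x)) (Set.Ici δ) :=
    (int_rpow_exp_base hβ).mono_set hIciSub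
  have hstep1 : (∫ x in Set.Ici δ, x ^ β * Real.log (1 + Real.exp (-s - t * x)))
      ≤ ∫ x in Set.Ici δ, (Real.exp (δ - s₀) * Real.exp (-δ * t)) * (x ^ β * Real.exp (-x)) := by
    refine setIntegral_mono_on hIci ((hbase.const_mul _)) measurableSet_Ici fun x hx => ?_
    have hx0 : (0:ℝ) < x := hIciSub hx
    have hxδ : δ ≤ x := hx
    have h1 : Real.log (1 + Real.exp (-s - t * x)) ≤ Real.exp (-s - t * x) := log_le _
    have h2 : Real.exp (-s - t * x) ≤ Real.exp (δ - s₀) * Real.exp (-δ * t) * Real.exp (-x) := by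
      rw [← Real.exp_add, ← Real.exp_add]
      refine Real.exp_le_exp.2 ?_
      nlinarith [mul_nonneg (sub_nonneg.2 ht) (sub_nonneg.2 hxδ)]
    calc x ^ β * Real.log (1 + Real.exp (-s - t * x))
        ≤ x ^ β * (Real.exp (δ - s₀) * Real.exp (-δ * t) * Real.exp (-x)) :=
          mul_le_mul_of_nonneg_left (h1.trans h2) (Real.rpow_nonneg hx0.le β)
      _ = (Real.exp (δ - s₀) * Real.exp (-δ * t)) * (x ^ β * Real.exp (-x)) := by ring
  have hstep2 : (∫ x in Set.Ici δ, x ^ β * Real.exp (-x)) ≤ K0 := by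
    refine setIntegral_mono_set (int_rpow_exp_base hβ) ?_ hIciSub.eventuallyLE
    filter_upwards [ae_restrict_mem measurableSet_Ioi] with x hx
    exact mul_nonneg (Real.rpow_nonneg (le_of_lt hx) β) (Real.exp_pos _).le
  have hCpos : (0:ℝ) ≤ Real.exp (δ - s₀) * Real.exp (-δ * t) := by positivity
  calc (∫ x in Set.Ici δ, x ^ β * Real.log (1 + Real.exp (-s - t * x)))
      ≤ (Real.exp (δ - s₀) * Real.exp (-δ * t)) * ∫ x in Set.Ici δ, x ^ β * Real.exp (-x) := by
        rw [← integral_const_mul]; exact hstep1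
    _ ≤ (Real.exp (δ - s₀) * Real.exp (-δ * t)) * K0 := mul_le_mul_of_nonneg_left hstep2 hCpos
    _ = (Real.exp (δ - s₀) * K0) * Real.exp (-δ * t) := by ring
    _ ≤ (Real.exp (δ - s₀) * K0 + 1) * Real.exp (-δ * t) := by
        have := Real.exp_pos (-δ * t)
        nlinarith
end

section
/- (General Laplace-type asymptotics, Proposition B.1(ii), with sharp error order t^{−1/m}.) Let m ≥ 1 be an integer, β > −1, q₀ > 0 and δ > 0. Let q be holomorphic on a complex neighborhood of 0, real-valued and continuous on [0,δ], with q(x) > 0 for all x ∈ (0,δ], and with q(z) = q₀·z^m + O(z^{m+1}) as z → 0. Let f ∈ C¹([0,δ]; ℝ) with f(0) ≠ 0, and for t > 0, s ∈ ℝ set I_t(s) := ∫₀^δ x^β · f(x) · log(1 + e^{−s − t·q(x)}) dx. Then for every s₀ ∈ ℝ there exist C > 0 and T > 0 such that for all t ≥ T and all s ≥ s₀: | I_t(s) − ( f(0)/(m·q₀^{(β+1)/m}) ) · t^{−(β+1)/m} · F_{(β+1)/m − 1}(s) | ≤ C · t^{−(β+2)/m}. -/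
open MeasureTheory
open Set Real

noncomputable def Lfun (y : ℝ) : ℝ := Real.log (1 + Real.exp (-y))

lemma Lfun_nonneg (y : ℝ) : 0 ≤ Lfun y :=
  Real.log_nonneg (by linarith [Real.exp_pos (-y)])

lemma Lfun_le_exp (y : ℝ) : Lfun y ≤ Real.exp (-y) := by
  have h := Real.log_le_sub_one_of_pos (x := 1 + Real.exp (-y)) (by positivity)
  simpa [Lfun] using h

lemma Lfun_anti {a b : ℝ} (h : a ≤ b) : Lfun b ≤ Lfun a := by
  apply Real.log_le_log (by positivity)
  have := Real.exp_le_exp.mpr (neg_le_neg h)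
  linarith

lemma Lfun_diff_le {a b : ℝ} (h : a ≤ b) : Lfun a - Lfun b ≤ (b - a) * Real.exp (-a) := by
  have h1 : Lfun a - Lfun b ≤ Real.exp (-a) - Real.exp (-b) := by
    have hb : (0:ℝ) < 1 + Real.exp (-b) := by positivity
    have : Lfun a - Lfun b = Real.log ((1 + Real.exp (-a)) / (1 + Real.exp (-b))) := by
      rw [Real.log_div (by positivity) (by positivity)]; rfl
    rw [this]
    have h2 := Real.log_le_sub_one_of_pos (x := (1 + Real.exp (-a)) / (1 + Real.exp (-b)))
      (by positivity)
    have h3 : (1 + Real.exp (-a)) / (1 + Real.exp (-b)) - 1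
        = (Real.exp (-a) - Real.exp (-b)) / (1 + Real.exp (-b)) := by
      field_simp
      ring
    have h4 : (Real.exp (-a) - Real.exp (-b)) / (1 + Real.exp (-b))
        ≤ Real.exp (-a) - Real.exp (-b) := by
      have h5 : 0 ≤ Real.exp (-a) - Real.exp (-b) := by
        have := Real.exp_le_exp.mpr (neg_le_neg h); linarith
      rw [div_le_iff₀ hb]
      nlinarith [Real.exp_pos (-b)]
    linarith [h2, h3 ▸ h2]
  have h6 : Real.exp (-a) - Real.exp (-b) ≤ (b - a) * Real.exp (-a) := by
    have h7 : Real.exp (-b) = Real.exp (-a) * Real.exp (a - b) := by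
      rw [← Real.exp_add]; ring_nf
    have h8 : (a - b) + 1 ≤ Real.exp (a - b) := Real.add_one_le_exp _
    nlinarith [Real.exp_pos (-a), Real.exp_pos (a-b)]
  linarith

lemma Lfun_diff_abs {u v w : ℝ} (hu : w ≤ u) (hv : w ≤ v) :
    |Lfun u - Lfun v| ≤ |u - v| * Real.exp (-w) := by
  rcases le_total u v with h | h
  · have h1 := Lfun_diff_le h
    have h2 : 0 ≤ Lfun u - Lfun v := by linarith [Lfun_anti h]
    rw [abs_of_nonneg h2, abs_of_nonpos (by linarith : u - v ≤ 0)]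
    calc Lfun u - Lfun v ≤ (v - u) * Real.exp (-u) := h1
      _ ≤ (v - u) * Real.exp (-w) := by
          apply mul_le_mul_of_nonneg_left (Real.exp_le_exp.mpr (by linarith)) (by linarith)
      _ = -(u - v) * Real.exp (-w) := by ring
  · have h1 := Lfun_diff_le h
    have h2 : 0 ≤ Lfun v - Lfun u := by linarith [Lfun_anti h]
    rw [abs_of_nonpos (by linarith : Lfun u - Lfun v ≤ 0), abs_of_nonneg (by linarith : 0 ≤ u - v)]
    calc -(Lfun u - Lfun v) = Lfun v - Lfun u := by ring
      _ ≤ (u - v) * Real.exp (-v) := h1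
      _ ≤ (u - v) * Real.exp (-w) := by
          apply mul_le_mul_of_nonneg_left (Real.exp_le_exp.mpr (by linarith)) (by linarith)

lemma subst_pow (m : ℕ) (hm : 1 ≤ m) (γ : ℝ) (g : ℝ → ℝ) :
    ∫ x in Ioi (0:ℝ), x ^ γ * g (x ^ m) =
      ((m:ℝ))⁻¹ * ∫ y in Ioi (0:ℝ), y ^ ((γ+1)/(m:ℝ) - 1) * g y := by
  have hm0 : (0:ℝ) < (m:ℝ) := by exact_mod_cast Nat.lt_of_lt_of_le Nat.zero_lt_one hm
  have key := integral_comp_rpow_Ioi_of_pos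
    (g := fun y => y ^ ((γ+1)/(m:ℝ) - 1) * g y) (p := (m:ℝ)) hm0
  rw [← key, ← integral_const_mul]
  apply setIntegral_congr_fun measurableSet_Ioi
  intro x hx
  have hx0 : (0:ℝ) < x := hx
  have hmne : ((m:ℝ)) ≠ 0 := hm0.ne'
  have e1 : (x ^ ((m:ℝ)) : ℝ) = x ^ m := Real.rpow_natCast x m
  have e2 : (x ^ ((m:ℝ))) ^ ((γ+1)/(m:ℝ) - 1) = x ^ (γ + 1 - (m:ℝ)) := by
    rw [← Real.rpow_mul hx0.le]
    congr 1
    field_simp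
  have e3 : x ^ ((m:ℝ)-1) * x ^ (γ+1-(m:ℝ)) = x ^ γ := by
    rw [← Real.rpow_add hx0]; ring_nf
  simp only [smul_eq_mul]
  rw [e2, e1]
  rw [show ((m:ℝ))⁻¹ * ((m:ℝ) * x ^ ((m:ℝ)-1) * (x ^ (γ+1-(m:ℝ)) * g (x ^ m)))
      = (((m:ℝ))⁻¹ * (m:ℝ)) * ((x ^ ((m:ℝ)-1) * x ^ (γ+1-(m:ℝ))) * g (x ^ m)) by ring,
    e3, inv_mul_cancel₀ hmne]
  ring

lemma subst_mul_pow (m : ℕ) (hm : 1 ≤ m) (γ a : ℝ) (ha : 0 < a) (g : ℝ → ℝ) :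
    ∫ x in Ioi (0:ℝ), x ^ γ * g (a * x ^ m) =
      ((m:ℝ))⁻¹ * a ^ (-((γ+1)/(m:ℝ))) * ∫ y in Ioi (0:ℝ), y ^ ((γ+1)/(m:ℝ) - 1) * g y := by
  rw [subst_pow m hm γ (fun u => g (a * u))]
  set p := (γ+1)/(m:ℝ) - 1 with hp
  have key := integral_comp_mul_left_Ioi (g := fun u => u ^ p * g u) 0 ha
  rw [mul_zero] at key
  have : ∫ y in Ioi (0:ℝ), y ^ p * g (a * y)
      = a ^ (-p) * ∫ y in Ioi (0:ℝ), (a * y) ^ p * g (a * y) := by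
    rw [← integral_const_mul]
    apply setIntegral_congr_fun measurableSet_Ioi
    intro y hy
    have hy0 : (0:ℝ) < y := hy
    simp only []
    rw [Real.mul_rpow ha.le hy0.le,
      show a ^ (-p) * (a ^ p * y ^ p * g (a*y)) = (a ^ (-p) * a ^ p) * (y ^ p * g (a*y)) by ring,
      ← Real.rpow_add ha]
    simp
  have ha2 : a ^ (-p) * a⁻¹ = a ^ (-((γ+1)/(m:ℝ))) := by
    rw [← Real.rpow_neg_one a, ← Real.rpow_add ha, hp]
    ring_nf
  rw [this, key, smul_eq_mul, ← ha2]
  ring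

lemma int_exp_pow (m : ℕ) (hm : 1 ≤ m) {γ a : ℝ} (hγ : -1 < γ) (ha : 0 < a) :
    IntegrableOn (fun x : ℝ => x ^ γ * Real.exp (-(a * x ^ m))) (Ioi 0) := by
  have h := integrableOn_rpow_mul_exp_neg_mul_rpow (p := (m:ℝ)) (s := γ) (b := a) hγ
    (by exact_mod_cast hm) ha
  apply h.congr_fun ?_ measurableSet_Ioi
  intro x hx
  simp only []
  rw [Real.rpow_natCast x m, neg_mul]

lemma cont_L : Continuous Lfun := by
  have h : Continuous fun y : ℝ => 1 + Real.exp (-y) := by continuity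
  exact h.log (fun y => by positivity)

lemma measAux (m : ℕ) (γ s a : ℝ) :
    AEStronglyMeasurable (fun x : ℝ => x ^ γ * Lfun (s + a * x ^ m))
      (volume.restrict (Ioi 0)) := by
  apply ContinuousOn.aestronglyMeasurable ?_ measurableSet_Ioi
  apply ContinuousOn.mul
  · exact fun x hx => (continuousWithinAt_id.rpow_const (Or.inl (ne_of_gt hx)))
  · exact (cont_L.comp (by continuity)).continuousOn

lemma int_L_pow (m : ℕ) (hm : 1 ≤ m) {γ a : ℝ} (hγ : -1 < γ) (ha : 0 < a) (s : ℝ) :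
    IntegrableOn (fun x : ℝ => x ^ γ * Lfun (s + a * x ^ m)) (Ioi 0) := by
  apply Integrable.mono' (((int_exp_pow m hm hγ ha).const_mul (Real.exp (-s))))
    (measAux m γ s a)
  filter_upwards [ae_restrict_mem measurableSet_Ioi] with x hx
  have hx0 : (0:ℝ) < x := hx
  have h1 : Lfun (s + a * x ^ m) ≤ Real.exp (-s) * Real.exp (-(a * x ^ m)) := by
    rw [← Real.exp_add]
    exact (Lfun_le_exp _).trans_eq (by ring_nf)
  have h0 : 0 ≤ Lfun (s + a * x ^ m) := Lfun_nonneg _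
  rw [Real.norm_eq_abs, abs_of_nonneg (by positivity)]
  calc x ^ γ * Lfun (s + a * x ^ m) ≤ x ^ γ * (Real.exp (-s) * Real.exp (-(a * x ^ m))) := by
        apply mul_le_mul_of_nonneg_left h1 (by positivity)
    _ = Real.exp (-s) * (x ^ γ * Real.exp (-(a * x ^ m))) := by ring

lemma model_L (m : ℕ) (hm : 1 ≤ m) {γ a : ℝ} (ha : 0 < a) (s : ℝ) :
    ∫ x in Ioi (0:ℝ), x ^ γ * Lfun (s + a * x ^ m)
      = ((m:ℝ))⁻¹ * a ^ (-((γ+1)/(m:ℝ))) * Fbeta ((γ+1)/(m:ℝ) - 1) s := by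
  rw [subst_mul_pow m hm γ a ha (fun u => Lfun (s + u))]
  congr 1
  apply setIntegral_congr_fun measurableSet_Ioi
  intro y hy
  simp only [Lfun]
  congr 2
  ring

lemma model_exp (m : ℕ) (hm : 1 ≤ m) {γ a : ℝ} (ha : 0 < a) :
    ∫ x in Ioi (0:ℝ), x ^ γ * Real.exp (-(a * x ^ m))
      = ((m:ℝ))⁻¹ * a ^ (-((γ+1)/(m:ℝ))) *
          ∫ y in Ioi (0:ℝ), y ^ ((γ+1)/(m:ℝ) - 1) * Real.exp (-y) := by
  exact subst_mul_pow m hm γ a ha (fun u => Real.exp (-u))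

lemma expsmall (p ε : ℝ) (hε : 0 < ε) :
    ∃ T : ℝ, 2 ≤ T ∧ ∀ t : ℝ, T ≤ t → Real.exp (-(ε*t)) ≤ t ^ (-p) := by
  have h := tendsto_rpow_mul_exp_neg_mul_atTop_nhds_zero p ε hε
  have h2 : ∀ᶠ t in Filter.atTop, t ^ p * Real.exp (-ε * t) < 1 :=
    h.eventually_lt_const one_pos
  obtain ⟨T₀, hT₀⟩ := Filter.eventually_atTop.mp h2
  refine ⟨max T₀ 2, le_max_right _ _, fun t ht => ?_⟩
  have ht2 : (2:ℝ) ≤ t := le_trans (le_max_right _ _) ht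
  have ht0 : (0:ℝ) < t := by linarith
  have h3 := (hT₀ t (le_trans (le_max_left _ _) ht)).le
  have h4 : (0:ℝ) < t ^ p := Real.rpow_pos_of_pos ht0 _
  rw [Real.rpow_neg ht0.le, ← neg_mul]
  rw [mul_comm] at h3
  exact (le_inv_mul_iff₀ h4).mpr (by simpa [mul_comm] using h3) |>.trans_eq (by simp)

lemma abs_setIntegral_le {S : Set ℝ} (hS : MeasurableSet S) {F h : ℝ → ℝ}
    (hFi : IntegrableOn F S) (hhi : IntegrableOn h S) (hb : ∀ x ∈ S, |F x| ≤ h x) :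
    |∫ x in S, F x| ≤ ∫ x in S, h x := by
  calc |∫ x in S, F x| ≤ ∫ x in S, |F x| := by
        simpa [Real.norm_eq_abs] using norm_integral_le_integral_norm (μ := volume.restrict S) F
    _ ≤ ∫ x in S, h x := setIntegral_mono_on hFi.abs hhi hS hb

set_option maxHeartbeats 2000000 in
/-- General Laplace-type asymptotics (Proposition B.1(ii)), with sharp error order
`t^{−(β+2)/m}`. -/
theorem statement8 (m : ℕ) (hm : 1 ≤ m) (β q₀ δ : ℝ)
    (hβ : -1 < β) (hq₀ : 0 < q₀) (hδ : 0 < δ)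
    (q f : ℝ → ℝ)
    (hqc : ContinuousOn q (Set.Icc 0 δ))
    (hqpos : ∀ x ∈ Set.Ioc (0 : ℝ) δ, 0 < q x)
    -- q extends holomorphically near 0 with q(z) = q₀ z^m + O(z^{m+1})
    (hhol : ∃ (Qc : ℂ → ℂ) (r : ℝ), 0 < r ∧
      DifferentiableOn ℂ Qc (Metric.ball 0 r) ∧
      (∀ x : ℝ, 0 ≤ x → x < r → x ≤ δ → Qc (x : ℂ) = ((q x : ℝ) : ℂ)) ∧
      ∃ C₁ : ℝ, ∀ z ∈ Metric.ball (0 : ℂ) r,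
        ‖Qc z - (q₀ : ℂ) * z ^ m‖ ≤ C₁ * ‖z‖ ^ (m + 1))
    (hf : ContDiffOn ℝ 1 f (Set.Icc 0 δ)) (hf0 : f 0 ≠ 0) :
    ∀ s₀ : ℝ, ∃ C T : ℝ, 0 < C ∧ 0 < T ∧
      ∀ t : ℝ, T ≤ t → ∀ s : ℝ, s₀ ≤ s →
        |(∫ x in Set.Ioo (0 : ℝ) δ, x ^ β * f x * Real.log (1 + Real.exp (-s - t * q x))) -
            (f 0 / ((m : ℝ) * q₀ ^ ((β + 1) / (m : ℝ)))) * t ^ (-((β + 1) / (m : ℝ))) *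
              Fbeta ((β + 1) / (m : ℝ) - 1) s|
          ≤ C * t ^ (-((β + 2) / (m : ℝ))) := by
  intro s₀
  classical
  obtain ⟨Qc, r, hr, _, hQag, C₁, hC₁⟩ := hhol
  have hmR : (0:ℝ) < (m:ℝ) := by exact_mod_cast Nat.lt_of_lt_of_le Nat.zero_lt_one hm
  set C₂ : ℝ := max C₁ 1 with hC₂def
  have hC₂1 : (1:ℝ) ≤ C₂ := le_max_right _ _
  have hC₂pos : (0:ℝ) < C₂ := by linarith
  have herr : ∀ x : ℝ, 0 ≤ x → x < r → x ≤ δ → |q x - q₀ * x ^ m| ≤ C₂ * x ^ (m+1) := by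
    intro x h0 hxr hxδ
    have hmem : (x:ℂ) ∈ Metric.ball (0:ℂ) r := by
      simp only [Metric.mem_ball, dist_zero_right, Complex.norm_real, Real.norm_eq_abs,
        abs_of_nonneg h0]
      exact hxr
    have h1 := hC₁ (x:ℂ) hmem
    rw [hQag x h0 hxr hxδ] at h1
    have h2 : ((q x : ℝ):ℂ) - (q₀:ℂ) * (x:ℂ)^m = ((q x - q₀ * x^m : ℝ):ℂ) := by push_cast; ring
    rw [h2, Complex.norm_real, Real.norm_eq_abs] at h1
    have h3 : ‖(x:ℂ)‖ = x := by rw [Complex.norm_real, Real.norm_eq_abs, abs_of_nonneg h0]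
    rw [h3] at h1
    calc |q x - q₀ * x ^ m| ≤ C₁ * x ^ (m+1) := h1
      _ ≤ C₂ * x ^ (m+1) := mul_le_mul_of_nonneg_right (le_max_left _ _) (pow_nonneg h0 _)
  obtain ⟨K, hK0, hKf⟩ : ∃ K : ℝ, 0 ≤ K ∧ ∀ x ∈ Icc (0:ℝ) δ, |f x - f 0| ≤ K * x := by
    have hd : ContinuousOn (derivWithin f (Icc 0 δ)) (Icc 0 δ) :=
      hf.continuousOn_derivWithin (uniqueDiffOn_Icc hδ) le_rfl
    obtain ⟨K0, hK0b⟩ := isCompact_Icc.exists_bound_of_continuousOn hd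
    refine ⟨max K0 0, le_max_right _ _, fun x hx => ?_⟩
    have hlip : LipschitzOnWith (Real.toNNReal (max K0 0)) f (Icc 0 δ) := by
      apply (convex_Icc (0:ℝ) δ).lipschitzOnWith_of_nnnorm_derivWithin_le
        (hf.differentiableOn one_ne_zero)
      intro y hy
      rw [← NNReal.coe_le_coe, coe_nnnorm, Real.coe_toNNReal _ (le_max_right _ _)]
      exact le_trans (hK0b y hy) (le_max_left _ _)
    have hd2 := hlip.dist_le_mul x hx 0 (left_mem_Icc.mpr hδ.le)
    rw [Real.dist_eq, Real.dist_eq, sub_zero] at hd2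
    calc |f x - f 0| ≤ (Real.toNNReal (max K0 0)) * |x| := hd2
      _ = (max K0 0) * x := by rw [Real.coe_toNNReal _ (le_max_right _ _), abs_of_nonneg hx.1]
  obtain ⟨Mf, hMf0, hMf⟩ : ∃ Mf : ℝ, 0 ≤ Mf ∧ ∀ x ∈ Icc (0:ℝ) δ, |f x| ≤ Mf := by
    obtain ⟨Mf0, hb⟩ := isCompact_Icc.exists_bound_of_continuousOn hf.continuousOn
    exact ⟨max Mf0 0, le_max_right _ _,
      fun x hx => le_trans (by simpa using hb x hx) (le_max_left _ _)⟩
  set η : ℝ := min (min (r/2) δ) (q₀/(2*C₂)) with hηdef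
  have hη0 : 0 < η := by
    apply lt_min (lt_min (by linarith) hδ) (by positivity)
  have hηδ : η ≤ δ := le_trans (min_le_left _ _) (min_le_right _ _)
  have hηr : η < r := lt_of_le_of_lt (le_trans (min_le_left _ _) (min_le_left _ _)) (by linarith)
  have hηq : C₂ * η ≤ q₀/2 := by
    have h1 : η ≤ q₀/(2*C₂) := min_le_right _ _
    have h2 := mul_le_mul_of_nonneg_left h1 hC₂pos.le
    calc C₂ * η ≤ C₂ * (q₀/(2*C₂)) := h2
      _ = q₀/2 := by field_simp
  have hq_diff : ∀ x ∈ Icc (0:ℝ) η, |q x - q₀ * x ^ m| ≤ C₂ * x ^ (m+1) :=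
    fun x hx => herr x hx.1 (lt_of_le_of_lt hx.2 hηr) (hx.2.trans hηδ)
  have hq_lb : ∀ x ∈ Icc (0:ℝ) η, (q₀/2) * x ^ m ≤ q x := by
    intro x hx
    have h1 := hq_diff x hx
    have hxm : (0:ℝ) ≤ x ^ m := pow_nonneg hx.1 m
    have h2 : C₂ * x ^ (m+1) ≤ (q₀/2) * x ^ m := by
      rw [pow_succ]
      have h3 : C₂ * x ≤ q₀ / 2 :=
        le_trans (mul_le_mul_of_nonneg_left hx.2 hC₂pos.le) hηq
      calc C₂ * (x ^ m * x) = (C₂ * x) * x ^ m := by ring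
        _ ≤ (q₀/2) * x ^ m := mul_le_mul_of_nonneg_right h3 hxm
    have h4 := (abs_le.mp h1).1
    linarith
  obtain ⟨c, hc0, hclb⟩ : ∃ c : ℝ, 0 < c ∧ ∀ x ∈ Icc η δ, c ≤ q x := by
    obtain ⟨xm, hxm, hmin⟩ := isCompact_Icc.exists_isMinOn (nonempty_Icc.mpr hηδ)
      (hqc.mono (Icc_subset_Icc hη0.le le_rfl))
    exact ⟨q xm, hqpos xm ⟨lt_of_lt_of_le hη0 hxm.1, hxm.2⟩, fun x hx => hmin hx⟩
  set p2 : ℝ := (β+2)/(m:ℝ) with hp2def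
  set γ₂ : ℝ := β + (m:ℝ) + 1 with hγ₂def
  set G1 : ℝ := ∫ y in Ioi (0:ℝ), y ^ ((β+1+1)/(m:ℝ) - 1) * Real.exp (-y) with hG1def
  set G2 : ℝ := ∫ y in Ioi (0:ℝ), y ^ ((γ₂+1)/(m:ℝ) - 1) * Real.exp (-y) with hG2def
  set D : ℝ := ∫ x in Ioi (0:ℝ), x ^ β * Real.exp (-(q₀/2 * x ^ m)) with hDdef
  have hG1 : 0 ≤ G1 := setIntegral_nonneg measurableSet_Ioi
    (fun y hy => mul_nonneg (Real.rpow_nonneg (le_of_lt hy) _) (Real.exp_pos _).le)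
  have hG2 : 0 ≤ G2 := setIntegral_nonneg measurableSet_Ioi
    (fun y hy => mul_nonneg (Real.rpow_nonneg (le_of_lt hy) _) (Real.exp_pos _).le)
  have hD : 0 ≤ D := setIntegral_nonneg measurableSet_Ioi
    (fun y hy => mul_nonneg (Real.rpow_nonneg (le_of_lt hy) _) (Real.exp_pos _).le)
  set Mβ : ℝ := max (η ^ β) (δ ^ β) with hMβdef
  have hMβ0 : 0 ≤ Mβ := le_trans (Real.rpow_nonneg hη0.le β) (le_max_left _ _)
  have hMβ : ∀ x ∈ Icc η δ, x ^ β ≤ Mβ := by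
    intro x hx
    rcases le_or_gt 0 β with hb | hb
    · exact le_trans (Real.rpow_le_rpow (by linarith [hη0, hx.1]) hx.2 hb) (le_max_right _ _)
    · exact le_trans (Real.rpow_le_rpow_of_nonpos hη0 hx.1 hb.le) (le_max_left _ _)
  set ε : ℝ := q₀ * η ^ m / 2 with hεdef
  have hε : 0 < ε := by
    have := pow_pos hη0 m
    positivity
  obtain ⟨T₁, hT₁2, hT₁⟩ := expsmall p2 c hc0
  obtain ⟨T₂, hT₂2, hT₂⟩ := expsmall p2 ε hε
  set A1 : ℝ := Real.exp (-s₀) * K * ((m:ℝ)⁻¹ * (q₀/2) ^ (-((β+1+1)/(m:ℝ))) * G1) with hA1def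
  set A2 : ℝ := Real.exp (-s₀) * (|f 0| * C₂) *
      ((m:ℝ)⁻¹ * (q₀/2) ^ (-((γ₂+1)/(m:ℝ))) * G2) with hA2def
  set A3 : ℝ := Mβ * Mf * Real.exp (-s₀) * (δ - η) with hA3def
  set A4 : ℝ := |f 0| * (Real.exp (-s₀) * D) with hA4def
  have hA1 : 0 ≤ A1 := by positivity
  have hA2 : 0 ≤ A2 := by positivity
  have hA3 : 0 ≤ A3 :=
    mul_nonneg (mul_nonneg (mul_nonneg hMβ0 hMf0) (Real.exp_pos _).le) (sub_nonneg.mpr hηδ)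
  have hA4 : 0 ≤ A4 := by positivity
  refine ⟨A1+A2+A3+A4+1, max (max T₁ T₂) 2, by linarith only [hA1, hA2, hA3, hA4],
    by positivity, ?_⟩
  intro t ht s hs
  have ht2 : (2:ℝ) ≤ t := le_trans (le_max_right _ _) ht
  have ht0 : (0:ℝ) < t := lt_of_lt_of_le two_pos ht2
  have htT₁ : T₁ ≤ t := le_trans (le_trans (le_max_left _ _) (le_max_left _ _)) ht
  have htT₂ : T₂ ≤ t := le_trans (le_trans (le_max_right _ _) (le_max_left _ _)) ht
  have ha1 : (0:ℝ) < t * q₀ := by positivity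
  have ha2 : (0:ℝ) < q₀/2 * t := by positivity
  set g : ℝ → ℝ := fun x => x ^ β * f x * Lfun (s + t * q x) with hgdef
  set M : ℝ → ℝ := fun x => x ^ β * Lfun (s + t * q₀ * x ^ m) with hMdef
  have hes : Real.exp (-s) ≤ Real.exp (-s₀) := Real.exp_le_exp.mpr (by linarith)
  -- rewrite goal integral
  have hgoal1 : (∫ x in Ioo (0:ℝ) δ, x ^ β * f x * Real.log (1 + Real.exp (-s - t * q x)))
      = ∫ x in Ioo (0:ℝ) δ, g x := by
    apply setIntegral_congr_fun measurableSet_Ioo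
    intro x hx
    simp only [hgdef, Lfun]
    congr 3
    ring
  -- main term identity
  have hmain : (f 0 / ((m:ℝ) * q₀ ^ ((β+1)/(m:ℝ)))) * t ^ (-((β+1)/(m:ℝ))) *
      Fbeta ((β+1)/(m:ℝ) - 1) s = f 0 * ∫ x in Ioi (0:ℝ), M x := by
    have h1 : ∫ x in Ioi (0:ℝ), M x
        = ((m:ℝ))⁻¹ * (t*q₀) ^ (-((β+1)/(m:ℝ))) * Fbeta ((β+1)/(m:ℝ) - 1) s := by
      rw [hMdef]
      exact model_L m hm ha1 s
    rw [h1, Real.mul_rpow ht0.le hq₀.le, Real.rpow_neg hq₀.le]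
    have hqp : (0:ℝ) < q₀ ^ ((β+1)/(m:ℝ)) := Real.rpow_pos_of_pos hq₀ _
    field_simp
  -- integrability of g
  have hgInt : IntegrableOn g (Ioo 0 δ) := by
    have hxβ : IntegrableOn (fun x : ℝ => x ^ β) (Ioo 0 δ) := by
      have h := intervalIntegral.intervalIntegrable_rpow' (a := 0) (b := δ) hβ
      rwa [intervalIntegrable_iff_integrableOn_Ioo_of_le hδ.le] at h
    have hmeas : AEStronglyMeasurable g (volume.restrict (Ioo 0 δ)) := by
      apply ContinuousOn.aestronglyMeasurable ?_ measurableSet_Ioo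
      apply ContinuousOn.mul
      apply ContinuousOn.mul
      · exact fun x hx => (continuousWithinAt_id.rpow_const (Or.inl (ne_of_gt hx.1)))
      · exact hf.continuousOn.mono Ioo_subset_Icc_self
      · exact cont_L.comp_continuousOn
          (continuousOn_const.add (continuousOn_const.mul (hqc.mono Ioo_subset_Icc_self)))
    apply Integrable.mono' (hxβ.const_mul (Mf * Real.exp (-s₀))) hmeas
    filter_upwards [ae_restrict_mem measurableSet_Ioo] with x hx
    have hx0 : (0:ℝ) < x := hx.1
    have hq0 : 0 < q x := hqpos x ⟨hx.1, hx.2.le⟩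
    have hL : Lfun (s + t * q x) ≤ Real.exp (-s₀) := by
      calc Lfun (s + t*q x) ≤ Real.exp (-(s + t*q x)) := Lfun_le_exp _
        _ ≤ Real.exp (-s₀) := by
            apply Real.exp_le_exp.mpr
            have h9 : (0:ℝ) ≤ t * q x := (mul_pos ht0 hq0).le
            linarith only [h9, hs]
    rw [Real.norm_eq_abs, hgdef]
    simp only []
    rw [abs_mul, abs_mul, abs_of_nonneg (Real.rpow_nonneg hx0.le β),
      abs_of_nonneg (Lfun_nonneg _)]
    calc x^β * |f x| * Lfun (s+t*q x) ≤ (x^β * Mf) * Real.exp (-s₀) := by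
          apply mul_le_mul (mul_le_mul_of_nonneg_left (hMf x ⟨hx0.le, hx.2.le⟩)
            (Real.rpow_nonneg hx0.le β)) hL (Lfun_nonneg _)
            (mul_nonneg (Real.rpow_nonneg hx0.le β) hMf0)
      _ = Mf * Real.exp (-s₀) * x^β := by ring
  have hMInt : IntegrableOn M (Ioi 0) := by
    simpa [hMdef, mul_assoc] using int_L_pow m hm hβ ha1 s
  -- splits
  have hdisj : Disjoint (Ioo (0:ℝ) η) (Ico η δ) := by
    refine Set.disjoint_left.mpr (fun x hx1 hx2 => ?_)
    exact absurd hx2.1 (not_le.mpr hx1.2)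
  have hsplit_g : ∫ x in Ioo (0:ℝ) δ, g x = (∫ x in Ioo (0:ℝ) η, g x) + ∫ x in Ico η δ, g x := by
    rw [← setIntegral_union hdisj measurableSet_Ico
      (hgInt.mono_set (Ioo_subset_Ioo le_rfl hηδ)) (hgInt.mono_set ?_),
      Ioo_union_Ico_eq_Ioo hη0 hηδ]
    exact fun x hx => ⟨lt_of_lt_of_le hη0 hx.1, hx.2⟩
  have hdisj2 : Disjoint (Ioo (0:ℝ) η) (Ici η) := by
    refine Set.disjoint_left.mpr (fun x hx1 hx2 => ?_)
    exact absurd hx2 (not_le.mpr hx1.2)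
  have hsplit_M : ∫ x in Ioi (0:ℝ), M x = (∫ x in Ioo (0:ℝ) η, M x) + ∫ x in Ici η, M x := by
    rw [← setIntegral_union hdisj2 measurableSet_Ici
      (hMInt.mono_set Ioo_subset_Ioi_self) (hMInt.mono_set (fun x hx => lt_of_lt_of_le hη0 hx)),
      Ioo_union_Ici_eq_Ioi hη0]
  -- E12 bound
  have hE12 : |(∫ x in Ioo (0:ℝ) η, g x) - f 0 * ∫ x in Ioo (0:ℝ) η, M x|
      ≤ A1 * t ^ (-p2) + A2 * t ^ (-p2) := by
    have hint1 : IntegrableOn (fun x : ℝ => x ^ (β+1) * Real.exp (-(q₀/2*t * x^m))) (Ioi 0) :=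
      int_exp_pow m hm (by linarith only [hβ]) ha2
    have hγ₂gt : (-1:ℝ) < γ₂ := by
      rw [hγ₂def]; linarith only [hβ, hmR]
    have hint2 : IntegrableOn (fun x : ℝ => x ^ γ₂ * Real.exp (-(q₀/2*t * x^m))) (Ioi 0) :=
      int_exp_pow m hm hγ₂gt ha2
    set h : ℝ → ℝ := fun x => Real.exp (-s₀) *
      (K * (x ^ (β+1) * Real.exp (-(q₀/2*t * x ^ m)))
        + |f 0| * C₂ * t * (x ^ γ₂ * Real.exp (-(q₀/2*t * x ^ m)))) with hhdef
    have hhInt : IntegrableOn h (Ioi 0) := by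
      rw [hhdef]
      exact ((hint1.const_mul K).add (hint2.const_mul _)).const_mul _
    have hgInt' : IntegrableOn g (Ioo 0 η) := hgInt.mono_set (Ioo_subset_Ioo le_rfl hηδ)
    have hMInt' : IntegrableOn M (Ioo 0 η) := hMInt.mono_set Ioo_subset_Ioi_self
    have heq : (∫ x in Ioo (0:ℝ) η, g x) - f 0 * ∫ x in Ioo (0:ℝ) η, M x
        = ∫ x in Ioo (0:ℝ) η, (g x - f 0 * M x) := by
      rw [← integral_const_mul, ← integral_sub hgInt' (hMInt'.const_mul (f 0))]
    have hpt : ∀ x ∈ Ioo (0:ℝ) η, |g x - f 0 * M x| ≤ h x := by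
      intro x hx
      have hx0 : (0:ℝ) < x := hx.1
      have hIcc : x ∈ Icc (0:ℝ) η := ⟨hx0.le, hx.2.le⟩
      have hql := hq_lb x hIcc
      have hqd := hq_diff x hIcc
      have hxm0 : (0:ℝ) ≤ x ^ m := pow_nonneg hx0.le m
      have ht9 : q₀/2*t * x^m ≤ t * q x := by
        have h9 := mul_le_mul_of_nonneg_left hql ht0.le
        linarith only [h9]
      have ht10 : q₀/2*t * x^m ≤ t * q₀ * x^m := by
        have h9 : (0:ℝ) ≤ t * (q₀/2) * x^m := by positivity
        linarith only [h9]
      have hsplit2 : g x - f 0 * M x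
          = x^β * (f x - f 0) * Lfun (s + t * q x)
            + f 0 * (x^β * (Lfun (s + t * q x) - Lfun (s + t * q₀ * x^m))) := by
        rw [hgdef, hMdef]
        simp only []
        ring
      have hb1 : |x^β * (f x - f 0) * Lfun (s + t * q x)|
          ≤ Real.exp (-s₀) * (K * (x ^ (β+1) * Real.exp (-(q₀/2*t * x ^ m)))) := by
        rw [abs_mul, abs_mul, abs_of_nonneg (Real.rpow_nonneg hx0.le β),
          abs_of_nonneg (Lfun_nonneg _)]
        have hL1 : Lfun (s + t * q x) ≤ Real.exp (-s₀) * Real.exp (-(q₀/2*t * x^m)) := by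
          calc Lfun (s + t*q x) ≤ Real.exp (-(s + t*q x)) := Lfun_le_exp _
            _ ≤ Real.exp (-(s₀ + q₀/2*t * x^m)) :=
                Real.exp_le_exp.mpr (by linarith only [hs, ht9])
            _ = Real.exp (-s₀) * Real.exp (-(q₀/2*t * x^m)) := by
                rw [← Real.exp_add]; ring_nf
        have hKx : |f x - f 0| ≤ K * x := hKf x ⟨hx0.le, hx.2.le.trans hηδ⟩
        calc x^β * |f x - f 0| * Lfun (s + t*q x)
            ≤ (x^β * (K * x)) * (Real.exp (-s₀) * Real.exp (-(q₀/2*t * x^m))) := by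
              apply mul_le_mul (mul_le_mul_of_nonneg_left hKx (Real.rpow_nonneg hx0.le β))
                hL1 (Lfun_nonneg _)
              positivity
          _ = Real.exp (-s₀) * (K * ((x^β * x) * Real.exp (-(q₀/2*t * x^m)))) := by ring
          _ = Real.exp (-s₀) * (K * (x^(β+1) * Real.exp (-(q₀/2*t * x^m)))) := by
              rw [Real.rpow_add_one hx0.ne' β]
      have hb2 : |f 0 * (x^β * (Lfun (s + t * q x) - Lfun (s + t * q₀ * x^m)))|
          ≤ Real.exp (-s₀) * (|f 0| * C₂ * t * (x ^ γ₂ * Real.exp (-(q₀/2*t * x ^ m)))) := by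
        rw [abs_mul, abs_mul, abs_of_nonneg (Real.rpow_nonneg hx0.le β)]
        have hdiff : |Lfun (s + t * q x) - Lfun (s + t * q₀ * x^m)|
            ≤ (t * (C₂ * x^(m+1))) * (Real.exp (-s₀) * Real.exp (-(q₀/2*t * x^m))) := by
          have h11 := Lfun_diff_abs (w := s + q₀/2*t * x^m)
            (by linarith only [ht9] : s + q₀/2*t*x^m ≤ s + t * q x)
            (by linarith only [ht10] : s + q₀/2*t*x^m ≤ s + t * q₀ * x^m)
          have h12 : |s + t * q x - (s + t * q₀ * x^m)| ≤ t * (C₂ * x^(m+1)) := by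
            rw [show s + t * q x - (s + t * q₀ * x^m) = t * (q x - q₀ * x^m) by ring,
              abs_mul, abs_of_nonneg ht0.le]
            exact mul_le_mul_of_nonneg_left hqd ht0.le
          have h13 : Real.exp (-(s + q₀/2*t * x^m))
              ≤ Real.exp (-s₀) * Real.exp (-(q₀/2*t * x^m)) := by
            rw [← Real.exp_add]
            exact Real.exp_le_exp.mpr (by linarith only [hs])
          calc |Lfun (s + t * q x) - Lfun (s + t * q₀ * x^m)|
              ≤ |s + t * q x - (s + t * q₀ * x^m)| * Real.exp (-(s + q₀/2*t * x^m)) := h11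
            _ ≤ (t * (C₂ * x^(m+1))) * (Real.exp (-s₀) * Real.exp (-(q₀/2*t * x^m))) := by
                apply mul_le_mul h12 h13 (Real.exp_pos _).le
                positivity
        have hxγ : x^β * x^(m+1) = x ^ γ₂ := by
          rw [← Real.rpow_natCast x (m+1), ← Real.rpow_add hx0, hγ₂def]
          congr 1
          push_cast
          ring
        calc |f 0| * (x^β * |Lfun (s + t * q x) - Lfun (s + t * q₀ * x^m)|)
            ≤ |f 0| * (x^β * ((t * (C₂ * x^(m+1))) *
                (Real.exp (-s₀) * Real.exp (-(q₀/2*t * x^m))))) := by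
              apply mul_le_mul_of_nonneg_left ?_ (abs_nonneg _)
              exact mul_le_mul_of_nonneg_left hdiff (Real.rpow_nonneg hx0.le β)
          _ = Real.exp (-s₀) * (|f 0| * C₂ * t * ((x^β * x^(m+1)) *
                Real.exp (-(q₀/2*t * x^m)))) := by ring
          _ = Real.exp (-s₀) * (|f 0| * C₂ * t * (x^γ₂ * Real.exp (-(q₀/2*t * x^m)))) := by
              rw [hxγ]
      calc |g x - f 0 * M x|
          ≤ |x^β * (f x - f 0) * Lfun (s + t * q x)|
            + |f 0 * (x^β * (Lfun (s + t * q x) - Lfun (s + t * q₀ * x^m)))| := by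
            rw [hsplit2]; exact abs_add_le _ _
        _ ≤ h x := by rw [hhdef]; simp only []; linarith only [hb1, hb2]
    have hIval : ∫ x in Ioi (0:ℝ), h x = A1 * t^(-p2) + A2 * t^(-p2) := by
      have he2 : t ^ (-((γ₂+1)/(m:ℝ))) = t ^ (-p2) / t := by
        have halg : t * t ^ (-((γ₂+1)/(m:ℝ))) = t ^ (-p2) := by
          have hexp : -p2 = 1 + -((γ₂+1)/(m:ℝ)) := by
            rw [hp2def, hγ₂def]
            field_simp
            ring
          rw [hexp, Real.rpow_add ht0, Real.rpow_one]
        rw [← halg]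
        field_simp
      have he1 : t ^ (-((β+1+1)/(m:ℝ))) = t ^ (-p2) := by
        rw [hp2def]
        congr 1
        ring
      rw [hhdef]
      rw [integral_const_mul, integral_add (hint1.const_mul K) (hint2.const_mul _),
        integral_const_mul, integral_const_mul,
        model_exp m hm (γ := β+1) ha2, model_exp m hm (γ := γ₂) ha2,
        ← hG1def, ← hG2def,
        Real.mul_rpow (by positivity : (0:ℝ) ≤ q₀/2) ht0.le,
        Real.mul_rpow (by positivity : (0:ℝ) ≤ q₀/2) ht0.le,
        he1, he2, hA1def, hA2def]
      field_simp
    calc |(∫ x in Ioo (0:ℝ) η, g x) - f 0 * ∫ x in Ioo (0:ℝ) η, M x|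
        = |∫ x in Ioo (0:ℝ) η, (g x - f 0 * M x)| := by rw [heq]
      _ ≤ ∫ x in Ioo (0:ℝ) η, h x :=
          abs_setIntegral_le measurableSet_Ioo (hgInt'.sub (hMInt'.const_mul _))
            (hhInt.mono_set Ioo_subset_Ioi_self) hpt
      _ ≤ ∫ x in Ioi (0:ℝ), h x := by
          apply setIntegral_mono_set hhInt ?_
            (HasSubset.Subset.eventuallyLE Ioo_subset_Ioi_self)
          filter_upwards [ae_restrict_mem measurableSet_Ioi] with x hx
          have hx0 : (0:ℝ) < x := hx
          rw [hhdef]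
          simp only []
          have h21 : (0:ℝ) ≤ x ^ (β+1) := Real.rpow_nonneg hx0.le _
          have h22 : (0:ℝ) ≤ x ^ γ₂ := Real.rpow_nonneg hx0.le _
          positivity
      _ = A1 * t^(-p2) + A2 * t^(-p2) := hIval
  -- E3 bound
  have hE3 : |∫ x in Ico η δ, g x| ≤ A3 * Real.exp (-(c*t)) := by
    have hbound : ∀ x ∈ Ico η δ, ‖g x‖ ≤ Mβ * Mf * (Real.exp (-s₀) * Real.exp (-(c*t))) := by
      intro x hx
      have hx0 : (0:ℝ) < x := lt_of_lt_of_le hη0 hx.1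
      have hc' : c ≤ q x := hclb x ⟨hx.1, hx.2.le⟩
      have hL : Lfun (s + t*q x) ≤ Real.exp (-s₀) * Real.exp (-(c*t)) := by
        calc Lfun (s+t*q x) ≤ Real.exp (-(s+t*q x)) := Lfun_le_exp _
          _ = Real.exp (-s) * Real.exp (-(t*q x)) := by rw [← Real.exp_add]; ring_nf
          _ ≤ Real.exp (-s₀) * Real.exp (-(c*t)) := by
              apply mul_le_mul hes (Real.exp_le_exp.mpr ?_) (Real.exp_pos _).le
                (Real.exp_pos _).le
              have h9 := mul_le_mul_of_nonneg_left hc' ht0.le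
              linarith only [h9]
      rw [Real.norm_eq_abs, hgdef]
      simp only []
      rw [abs_mul, abs_mul, abs_of_nonneg (Real.rpow_nonneg hx0.le β),
        abs_of_nonneg (Lfun_nonneg _)]
      exact mul_le_mul (mul_le_mul (hMβ x ⟨hx.1, hx.2.le⟩) (hMf x ⟨hx0.le, hx.2.le⟩)
        (abs_nonneg _) hMβ0) hL (Lfun_nonneg _) (mul_nonneg hMβ0 hMf0)
    have hmeas3 : AEStronglyMeasurable g (volume.restrict (Ico η δ)) :=
      hgInt.aestronglyMeasurable.mono_measure
        (Measure.restrict_mono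
          (fun x hx => (⟨lt_of_lt_of_le hη0 hx.1, hx.2⟩ : x ∈ Ioo (0:ℝ) δ)) le_rfl)
    have h1 := norm_setIntegral_le_of_norm_le_const (μ := volume) (s := Ico η δ)
      (C := Mβ * Mf * (Real.exp (-s₀) * Real.exp (-(c*t))))
      (by rw [Real.volume_Ico]; exact ENNReal.ofReal_lt_top) hbound
    rw [Real.norm_eq_abs] at h1
    calc |∫ x in Ico η δ, g x|
        ≤ Mβ * Mf * (Real.exp (-s₀) * Real.exp (-(c*t))) * (volume (Ico η δ)).toReal := h1
      _ = A3 * Real.exp (-(c*t)) := by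
          rw [Real.volume_Ico, ENNReal.toReal_ofReal (sub_nonneg.mpr hηδ), hA3def]
          ring
  -- E4 bound
  have hE4 : |∫ x in Ici η, M x| ≤ Real.exp (-s₀) * D * Real.exp (-(ε*t)) := by
    have hDint : IntegrableOn (fun x : ℝ => x^β * Real.exp (-(q₀/2 * x^m))) (Ioi 0) :=
      int_exp_pow m hm hβ (by positivity)
    have hsub : Ici η ⊆ Ioi (0:ℝ) := fun x hx => lt_of_lt_of_le hη0 hx
    have hpt : ∀ x ∈ Ici η, |M x| ≤ (Real.exp (-s₀) * Real.exp (-(ε*t))) *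
        (x^β * Real.exp (-(q₀/2 * x^m))) := by
      intro x hx
      have hx0 : (0:ℝ) < x := hsub hx
      have hxm : η ^ m ≤ x ^ m := pow_le_pow_left₀ hη0.le hx m
      have h5 : ε * t + q₀/2 * x^m ≤ t*q₀*x^m := by
        have hlin : η^m/2*t + x^m/2 ≤ t*x^m := by
          have hprod : (0:ℝ) ≤ (t - 2) * (x^m - η^m/2) :=
            mul_nonneg (by linarith only [ht2])
              (by linarith only [hxm, pow_nonneg hη0.le m])
          linarith only [hprod, hxm, pow_nonneg hη0.le m]
        have h6 := mul_le_mul_of_nonneg_left hlin hq₀.le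
        rw [hεdef]
        linarith only [h6]
      have hL : Lfun (s + t*q₀*x^m) ≤ Real.exp (-s₀) * Real.exp (-(ε*t)) *
          Real.exp (-(q₀/2*x^m)) := by
        calc Lfun (s + t*q₀*x^m) ≤ Real.exp (-(s + t*q₀*x^m)) := Lfun_le_exp _
          _ ≤ Real.exp (-(s₀ + (ε*t + q₀/2*x^m))) :=
            Real.exp_le_exp.mpr (by linarith only [hs, h5])
          _ = _ := by rw [← Real.exp_add, ← Real.exp_add]; ring_nf
      rw [hMdef]
      simp only []
      rw [abs_mul, abs_of_nonneg (Real.rpow_nonneg hx0.le β),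
        abs_of_nonneg (Lfun_nonneg _)]
      calc x^β * Lfun (s + t*q₀*x^m)
          ≤ x^β * (Real.exp (-s₀) * Real.exp (-(ε*t)) * Real.exp (-(q₀/2*x^m))) :=
            mul_le_mul_of_nonneg_left hL (Real.rpow_nonneg hx0.le β)
        _ = (Real.exp (-s₀) * Real.exp (-(ε*t))) * (x^β * Real.exp (-(q₀/2 * x^m))) := by
            ring
    calc |∫ x in Ici η, M x|
        ≤ ∫ x in Ici η, (Real.exp (-s₀) * Real.exp (-(ε*t))) *
            (x^β * Real.exp (-(q₀/2 * x^m))) :=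
          abs_setIntegral_le measurableSet_Ici (hMInt.mono_set hsub)
            (IntegrableOn.mono_set (hDint.const_mul _) hsub) hpt
      _ ≤ ∫ x in Ioi 0, (Real.exp (-s₀) * Real.exp (-(ε*t))) *
            (x^β * Real.exp (-(q₀/2 * x^m))) := by
          apply setIntegral_mono_set (hDint.const_mul _) ?_ (HasSubset.Subset.eventuallyLE hsub)
          filter_upwards [ae_restrict_mem measurableSet_Ioi] with x hx
          have hx0 : (0:ℝ) < x := hx
          have := Real.rpow_nonneg hx0.le β
          positivity
      _ = Real.exp (-s₀) * D * Real.exp (-(ε*t)) := by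
          rw [integral_const_mul, ← hDdef]
          ring
  -- assemble
  have hexp1 : A3 * Real.exp (-(c*t)) ≤ A3 * t ^ (-p2) :=
    mul_le_mul_of_nonneg_left (hT₁ t htT₁) hA3
  have hexp2 : |f 0| * (Real.exp (-s₀) * D * Real.exp (-(ε*t))) ≤ A4 * t ^ (-p2) := by
    rw [hA4def]
    rw [show |f 0| * (Real.exp (-s₀) * D * Real.exp (-(ε*t)))
      = (|f 0| * (Real.exp (-s₀) * D)) * Real.exp (-(ε*t)) by ring]
    exact mul_le_mul_of_nonneg_left (hT₂ t htT₂) (by positivity)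
  have htp2 : (0:ℝ) < t ^ (-p2) := Real.rpow_pos_of_pos ht0 _
  calc |(∫ x in Ioo (0:ℝ) δ, x ^ β * f x * Real.log (1 + Real.exp (-s - t * q x))) -
          (f 0 / ((m:ℝ) * q₀ ^ ((β+1)/(m:ℝ)))) * t ^ (-((β+1)/(m:ℝ))) *
            Fbeta ((β+1)/(m:ℝ) - 1) s|
      = |((∫ x in Ioo (0:ℝ) η, g x) - f 0 * ∫ x in Ioo (0:ℝ) η, M x)
          + (∫ x in Ico η δ, g x) + (- f 0 * ∫ x in Ici η, M x)| := by
        rw [hgoal1, hmain, hsplit_g, hsplit_M]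
        congr 1
        ring
    _ ≤ |(∫ x in Ioo (0:ℝ) η, g x) - f 0 * ∫ x in Ioo (0:ℝ) η, M x|
          + |∫ x in Ico η δ, g x| + |- f 0 * ∫ x in Ici η, M x| := by
        exact (abs_add_le _ _).trans (by gcongr; exact abs_add_le _ _)
    _ ≤ (A1 * t ^ (-p2) + A2 * t ^ (-p2)) + A3 * Real.exp (-(c*t))
          + |f 0| * (Real.exp (-s₀) * D * Real.exp (-(ε*t))) := by
        gcongr
        rw [abs_mul, abs_neg]
        exact mul_le_mul_of_nonneg_left hE4 (abs_nonneg _)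
    _ ≤ (A1 * t ^ (-p2) + A2 * t ^ (-p2)) + A3 * t ^ (-p2) + A4 * t ^ (-p2) := by
        exact add_le_add (add_le_add le_rfl hexp1) hexp2
    _ ≤ (A1+A2+A3+A4+1) * t ^ (-((β+2)/(m:ℝ))) := by
        rw [show -((β+2)/(m:ℝ)) = -p2 from by rw [hp2def],
          show A1*t^(-p2)+A2*t^(-p2)+A3*t^(-p2)+A4*t^(-p2) = (A1+A2+A3+A4)*t^(-p2) from by ring]
        exact mul_le_mul_of_nonneg_right (by linarith only []) htp2.le
end

section
/- (Asymptotics of the constant p₀ of the global parametrix, Proposition 5.2, first part.) Let a > 0, let m ≥ 1 be an integer, let t > 0, and let Q : [0,a] → ℝ be continuous with Q(x) > 0 for all x ∈ (0,a], holomorphic on a complex neighborhood of 0 and satisfying Q(z) = t·z^m + O(z^{m+1}) as z → 0. For n ∈ ℕ and s ∈ ℝ define p₀(n,s) := (1/(2π)) · ∫₀^a log(1 + e^{−s − n^{2m}·Q(x)}) / √(x(a−x)) dx and p_∞(s) := ( a^{−1/2}·t^{−1/(2m)}/(2πm) ) · F_{1/(2m) − 1}(s). Then for every s₀ ∈ ℝ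 there exist C > 0 and N ∈ ℕ such that for all n ≥ N and all s ≥ s₀: | p₀(n,s) − p_∞(s)/n | ≤ C·n^{−3}. -/
open MeasureTheory Set Real


open MeasureTheory

noncomputable def G (s y : ℝ) : ℝ := Real.log (1 + Real.exp (-s - y))

lemma G_nonneg (s y : ℝ) : 0 ≤ G s y :=
  Real.log_nonneg (by linarith [Real.exp_pos (-s - y)])

lemma log_one_add_le {u : ℝ} (hu : 0 ≤ u) : Real.log (1 + u) ≤ u := by
  have := Real.log_le_sub_one_of_pos (x := 1 + u) (by linarith)
  linarith

lemma G_le_exp (s y : ℝ) : G s y ≤ Real.exp (-s - y) :=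
  log_one_add_le (Real.exp_pos _).le

lemma abs_log_one_add_sub {u v : ℝ} (hu : 0 ≤ u) (hv : 0 ≤ v) :
    |Real.log (1 + u) - Real.log (1 + v)| ≤ |u - v| := by
  have key : ∀ p q : ℝ, 0 ≤ p → 0 ≤ q → p ≤ q →
      Real.log (1 + q) - Real.log (1 + p) ≤ q - p := by
    intro p q hp hq hpq
    have h1 : (0:ℝ) < 1 + p := by linarith
    have h2 : (0:ℝ) < 1 + q := by linarith
    have := Real.log_le_sub_one_of_pos (x := (1 + q) / (1 + p)) (by positivity)
    rw [Real.log_div h2.ne' h1.ne'] at this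
    have h3 : (1 + q) / (1 + p) - 1 = (q - p) / (1 + p) := by field_simp; ring
    have h4 : (q - p) / (1 + p) ≤ q - p := by
      apply div_le_self (by linarith) (by linarith)
    linarith
  rcases le_total u v with h | h
  · rw [abs_of_nonpos (by linarith [Real.log_le_log (by linarith : (0:ℝ) < 1+u) (by linarith : (1:ℝ)+u ≤ 1+v)]), abs_of_nonpos (by linarith)]
    have := key u v hu hv h
    linarith
  · have hlog : Real.log (1 + v) ≤ Real.log (1 + u) :=
      Real.log_le_log (by linarith) (by linarith)
    rw [abs_of_nonneg (by linarith), abs_of_nonneg (by linarith)]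
    exact key v u hv hu h

lemma abs_exp_sub_exp {p q : ℝ} : |Real.exp p - Real.exp q| ≤ Real.exp (max p q) * |p - q| := by
  have key : ∀ p q : ℝ, p ≤ q → Real.exp q - Real.exp p ≤ Real.exp q * (q - p) := by
    intro p q hpq
    have h := Real.add_one_le_exp (p - q)
    have h2 : Real.exp p = Real.exp q * Real.exp (p - q) := by
      rw [← Real.exp_add]; ring_nf
    nlinarith [Real.exp_pos q]
  rcases le_total p q with h | h
  · rw [abs_of_nonpos (by linarith [Real.exp_le_exp.mpr h]), abs_of_nonpos (by linarith),
      max_eq_right h]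
    have := key p q h; linarith
  · rw [abs_of_nonneg (by linarith [Real.exp_le_exp.mpr h]), abs_of_nonneg (by linarith),
      max_eq_left h]
    have := key q p h; linarith

lemma G_lipschitz (s y₁ y₂ : ℝ) :
    |G s y₁ - G s y₂| ≤ Real.exp (-s - min y₁ y₂) * |y₁ - y₂| := by
  have h1 := abs_log_one_add_sub (Real.exp_pos (-s - y₁)).le (Real.exp_pos (-s - y₂)).le
  have h2 := abs_exp_sub_exp (p := -s - y₁) (q := -s - y₂)
  have h3 : max (-s - y₁) (-s - y₂) = -s - min y₁ y₂ := by
    rcases le_total y₁ y₂ with h | h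
    · rw [min_eq_left h, max_eq_left (by linarith)]
    · rw [min_eq_right h, max_eq_right (by linarith)]
  have h4 : |(-s - y₁) - (-s - y₂)| = |y₁ - y₂| := by
    rw [show (-s - y₁) - (-s - y₂) = -(y₁ - y₂) by ring, abs_neg]
  calc |G s y₁ - G s y₂| ≤ |Real.exp (-s - y₁) - Real.exp (-s - y₂)| := h1
    _ ≤ Real.exp (max (-s-y₁) (-s-y₂)) * |(-s-y₁) - (-s-y₂)| := h2
    _ = Real.exp (-s - min y₁ y₂) * |y₁ - y₂| := by rw [h3, h4]

lemma G_anti (s : ℝ) {y₁ y₂ : ℝ} (h : y₁ ≤ y₂) : G s y₂ ≤ G s y₁ := by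
  apply Real.log_le_log (by positivity)
  have := Real.exp_le_exp.mpr (show -s - y₂ ≤ -s - y₁ by linarith)
  linarith

lemma G_cont (s : ℝ) : Continuous (G s) := by
  apply Continuous.log
  · continuity
  · intro y; positivity

lemma exp_cube_le {x : ℝ} (hx : 0 ≤ x) : x ^ 3 / 27 ≤ Real.exp x := by
  have h1 : x / 3 + 1 ≤ Real.exp (x / 3) := by
    have := Real.add_one_le_exp (x / 3); linarith
  have h2 : Real.exp x = Real.exp (x / 3) ^ 3 := by
    rw [← Real.exp_nat_mul]; norm_num [mul_div_cancel₀]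
  have h3 : (x / 3) ^ 3 ≤ (x / 3 + 1) ^ 3 := by
    apply pow_le_pow_left₀ (by positivity); linarith
  have h4 : (x / 3 + 1) ^ 3 ≤ Real.exp (x / 3) ^ 3 := by
    apply pow_le_pow_left₀ (by positivity) h1
  calc x ^ 3 / 27 = (x / 3) ^ 3 := by ring
    _ ≤ (x / 3 + 1) ^ 3 := h3
    _ ≤ Real.exp (x/3) ^ 3 := h4
    _ = Real.exp x := h2.symm

lemma exp_neg_le {y : ℝ} (hy : 0 < y) : Real.exp (-y) ≤ 27 / y ^ 3 := by
  have h := exp_cube_le hy.le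
  rw [Real.exp_neg, inv_le_comm₀ (Real.exp_pos y) (by positivity)]
  calc (27 / y ^ 3)⁻¹ = y ^ 3 / 27 := by rw [inv_div]
    _ ≤ Real.exp y := h



lemma sqrt_inv_eq_rpow {x : ℝ} (hx : 0 ≤ x) : (Real.sqrt x)⁻¹ = x ^ (-(1:ℝ)/2) := by
  rw [Real.sqrt_eq_rpow, ← Real.rpow_neg hx]
  norm_num

lemma key_identity_s9 (a t : ℝ) (ha : 0 < a) (ht : 0 < t) (m : ℕ) (hm : 1 ≤ m)
    (n : ℕ) (hn : 1 ≤ n) (s : ℝ) :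
    ∫ x in Ioi (0:ℝ), (Real.sqrt (a * x))⁻¹ * G s (t * (n:ℝ)^(2*m) * x ^ m)
      = a ^ (-(1:ℝ)/2) * t ^ (-(1/(2*(m:ℝ)))) / m / n * Fbeta (1/(2*(m:ℝ)) - 1) s := by
  have mpos : (0:ℝ) < m := by exact_mod_cast hm
  have npos : (0:ℝ) < n := by exact_mod_cast hn
  set c : ℝ := t * (n:ℝ)^(2*m) with hcdef
  have hc : 0 < c := by positivity
  set β : ℝ := 1/(2*(m:ℝ)) - 1 with hβdef
  set g : ℝ → ℝ := fun y => (1/(m:ℝ)) * (y ^ β * G s (c * y)) with hgdef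
  have stepA : EqOn (fun x => (Real.sqrt (a * x))⁻¹ * G s (c * x ^ m))
      (fun x => a ^ (-(1:ℝ)/2) * (((m:ℝ) * x ^ ((m:ℝ)-1)) • g (x ^ ((m:ℝ))))) (Ioi 0) := by
    intro x hx
    have hx0 : (0:ℝ) < x := hx
    have h2 : x ^ ((m:ℝ)) = x ^ m := Real.rpow_natCast x m
    have e1 : ((x:ℝ)^((m:ℝ)))^β = x ^ ((m:ℝ)*β) := (Real.rpow_mul hx0.le _ _).symm
    have key : ((m:ℝ) * x ^ ((m:ℝ)-1)) * ((1/(m:ℝ)) * (x^((m:ℝ)))^β) = x ^ (-(1:ℝ)/2) := by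
      rw [e1]
      have h4 : ((m:ℝ) * x ^ ((m:ℝ)-1)) * ((1/(m:ℝ)) * x ^ ((m:ℝ)*β))
          = x ^ ((m:ℝ)-1) * x ^ ((m:ℝ)*β) := by
        field_simp
      rw [h4, ← Real.rpow_add hx0]
      congr 1
      rw [hβdef]
      field_simp
      ring
    simp only [smul_eq_mul, hgdef]
    rw [Real.sqrt_mul ha.le, mul_inv, sqrt_inv_eq_rpow ha.le, sqrt_inv_eq_rpow hx0.le, h2]
    calc a ^ (-(1:ℝ)/2) * x ^ (-(1:ℝ)/2) * G s (c * x ^ m)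
        = a ^ (-(1:ℝ)/2) * (((m:ℝ) * x ^ ((m:ℝ)-1)) * ((1/(m:ℝ)) * (x^((m:ℝ)))^β) * G s (c * x ^ m)) := by
          rw [key]; ring
      _ = _ := by rw [← h2]; ring
  rw [MeasureTheory.setIntegral_congr_fun measurableSet_Ioi stepA, integral_const_mul,
    integral_comp_rpow_Ioi_of_pos mpos]
  simp only [hgdef]
  rw [integral_const_mul]
  have stepB : EqOn (fun y => y ^ β * G s (c * y))
      (fun y => c ^ (-β) * ((c * y) ^ β * G s (c * y))) (Ioi 0) := by
    intro y hy
    have hy0 : (0:ℝ) < y := hy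
    simp only
    rw [Real.mul_rpow hc.le hy0.le, ← mul_assoc, ← mul_assoc, ← Real.rpow_add hc]
    norm_num
  rw [MeasureTheory.setIntegral_congr_fun measurableSet_Ioi stepB, integral_const_mul,
    integral_comp_mul_left_Ioi (fun u => u ^ β * G s u) 0 hc, mul_zero]
  have hF : ∫ u in Ioi (0:ℝ), u ^ β * G s u = Fbeta β s := rfl
  rw [smul_eq_mul, ← mul_assoc, hF]
  have hcpow : c ^ (-β) * c⁻¹ = t ^ (-(1/(2*(m:ℝ)))) * ((n:ℝ))⁻¹ := by
    rw [show c⁻¹ = c ^ (-(1:ℝ)) from (Real.rpow_neg_one c).symm, ← Real.rpow_add hc]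
    have h5 : -β + -(1:ℝ) = -(1/(2*(m:ℝ))) := by rw [hβdef]; ring
    rw [h5, hcdef, Real.mul_rpow ht.le (by positivity)]
    congr 1
    rw [← Real.rpow_natCast (n:ℝ) (2*m), ← Real.rpow_mul (n.cast_nonneg)]
    have h6 : ((2*m : ℕ):ℝ) * (-(1/(2*(m:ℝ)))) = -1 := by
      push_cast
      field_simp
    rw [h6, Real.rpow_neg_one]
  have hre : c ^ (-β) * (c⁻¹ * Fbeta β s) = c ^ (-β) * c⁻¹ * Fbeta β s := by ring
  rw [hre, hcpow]
  ring


lemma integrableOn_pow_exp (m : ℕ) (hm : 1 ≤ m) {q b : ℝ} (hq : -1 < q) (hb : 0 < b) :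
    IntegrableOn (fun x : ℝ => x ^ q * Real.exp (-b * x ^ m)) (Ioi 0) := by
  have h := integrableOn_rpow_mul_exp_neg_mul_rpow hq
    (Nat.cast_pos.mpr hm) hb
  apply h.congr_fun ?_ measurableSet_Ioi
  intro x _
  simp [Real.rpow_natCast]

lemma integral_pow_exp_nonneg (m : ℕ) (q b : ℝ) :
    0 ≤ ∫ x in Ioi (0:ℝ), x ^ q * Real.exp (-b * x ^ m) := by
  apply setIntegral_nonneg measurableSet_Ioi
  intro x hx
  have : (0:ℝ) < x := hx
  positivity

lemma scaling (m : ℕ) {q b : ℝ} (hb : 0 < b) {n : ℕ} (hn : 1 ≤ n) :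
    ∫ x in Ioi (0:ℝ), x ^ q * Real.exp (-b * (((n:ℝ)^2 * x)) ^ m)
      = ((n:ℝ)^2) ^ (-q-1) * ∫ u in Ioi (0:ℝ), u ^ q * Real.exp (-b * u ^ m) := by
  have npos : (0:ℝ) < n := by exact_mod_cast hn
  set ν : ℝ := (n:ℝ)^2 with hνdef
  have hν : 0 < ν := by positivity
  have step : EqOn (fun x => x ^ q * Real.exp (-b * (ν * x) ^ m))
      (fun x => ν ^ (-q) * ((ν*x) ^ q * Real.exp (-b * (ν*x) ^ m))) (Ioi 0) := by
    intro x hx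
    have hx0 : (0:ℝ) < x := hx
    simp only
    rw [Real.mul_rpow hν.le hx0.le, ← mul_assoc, ← mul_assoc, ← Real.rpow_add hν]
    norm_num
  rw [MeasureTheory.setIntegral_congr_fun measurableSet_Ioi step, integral_const_mul,
    integral_comp_mul_left_Ioi (fun u => u ^ q * Real.exp (-b * u ^ m)) 0 hν, mul_zero,
    smul_eq_mul, ← mul_assoc]
  congr 1
  rw [show ν⁻¹ = ν ^ (-(1:ℝ)) from (Real.rpow_neg_one ν).symm, ← Real.rpow_add hν]
  ring_nf

lemma integrableOn_pow_exp_scaled (m : ℕ) (hm : 1 ≤ m) {q b : ℝ} (hq : -1 < q) (hb : 0 < b)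
    {n : ℕ} (hn : 1 ≤ n) :
    IntegrableOn (fun x : ℝ => x ^ q * Real.exp (-b * (((n:ℝ)^2 * x)) ^ m)) (Ioi 0) := by
  have npos : (0:ℝ) < n := by exact_mod_cast hn
  have hb' : 0 < b * ((n:ℝ)^2) ^ m := by positivity
  have h := integrableOn_pow_exp m hm hq hb'
  apply h.congr_fun ?_ measurableSet_Ioi
  intro x _
  show x ^ q * Real.exp (-(b * ((n:ℝ)^2)^m) * x^m) = x ^ q * Real.exp (-b * ((n:ℝ)^2*x)^m)
  rw [mul_pow]
  ring_nf

lemma integrableOn_inv_sqrt {a : ℝ} (ha : 0 < a) :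
    IntegrableOn (fun x => (Real.sqrt x)⁻¹) (Ioo 0 a) := by
  have h := intervalIntegral.intervalIntegrable_rpow' (a := 0) (b := a) (r := -(1:ℝ)/2)
    (by norm_num)
  rw [intervalIntegrable_iff_integrableOn_Ioc_of_le ha.le] at h
  apply (h.mono_set Ioo_subset_Ioc_self).congr_fun ?_ measurableSet_Ioo
  intro x hx
  exact (sqrt_inv_eq_rpow hx.1.le).symm

lemma intervalIntegrable_inv_sqrt {a : ℝ} (ha : 0 < a) :
    IntervalIntegrable (fun x => (Real.sqrt x)⁻¹) volume 0 a := by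
  rw [intervalIntegrable_iff_integrableOn_Ioc_of_le ha.le,
    integrableOn_Ioc_iff_integrableOn_Ioo]
  exact integrableOn_inv_sqrt ha

lemma integrableOn_inv_sqrt_sub {a : ℝ} (ha : 0 < a) :
    IntegrableOn (fun x => (Real.sqrt (a - x))⁻¹) (Ioo 0 a) := by
  have h2 := ((intervalIntegrable_inv_sqrt ha).comp_sub_left a).symm
  rw [sub_zero, sub_self] at h2
  rw [intervalIntegrable_iff_integrableOn_Ioc_of_le ha.le,
    integrableOn_Ioc_iff_integrableOn_Ioo] at h2
  exact h2

set_option maxHeartbeats 1000000 in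
lemma pointwise_bound
    (a t : ℝ) (ha : 0 < a) (ht : 0 < t) (m : ℕ) (hm : 1 ≤ m)
    (Q : ℝ → ℝ) (s₀ s : ℝ) (hs : s₀ ≤ s)
    (C₁' δ c₀ : ℝ) (hC₁'pos : 0 < C₁')
    (hδ0 : 0 < δ) (hδa2 : δ ≤ a/2) (hδt : C₁' * δ ≤ t/2)
    (hQδ : ∀ x : ℝ, 0 < x → x ≤ δ → |Q x - t * x ^ m| ≤ C₁' * x ^ (m+1))
    (hQc₀ : ∀ x : ℝ, δ < x → x < a → c₀ ≤ Q x)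
    (hc₀δ : c₀ ≤ t * δ ^ m) (hc₀pos : 0 < c₀)
    (n : ℕ) (hn : 1 ≤ n)
    (x : ℝ) (hx0 : 0 < x) (hxa : x < a) :
    |Real.log (1 + Real.exp (-s - (n:ℝ) ^ (2*m) * Q x)) / Real.sqrt (x * (a - x))
      - (Real.sqrt (a * x))⁻¹ * G s (t * (n:ℝ)^(2*m) * x ^ m)|
    ≤ Real.exp (-s₀) *
        ((n:ℝ)^(2*m) * (C₁' * (Real.sqrt (a/2))⁻¹ *
            (x^m * Real.sqrt x * Real.exp (-(t/2) * (((n:ℝ)^2 * x)) ^ m)))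
         + (a * Real.sqrt (a/2))⁻¹ * (Real.sqrt x * Real.exp (-(t/2) * (((n:ℝ)^2 * x)) ^ m))
         + 2 * (Real.sqrt δ)⁻¹ * Real.exp (-(c₀ * (n:ℝ)^(2*m))) * (Real.sqrt (a-x))⁻¹) := by
  have hn1 : (1:ℝ) ≤ (n:ℝ) := by exact_mod_cast hn
  set P : ℝ := (n:ℝ)^(2*m) with hPdef
  have hP1 : (1:ℝ) ≤ P := one_le_pow₀ hn1
  have hP0 : (0:ℝ) < P := lt_of_lt_of_le one_pos hP1
  set E₀ : ℝ := Real.exp (-s₀) with hE₀def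
  set εn : ℝ := Real.exp (-(c₀ * P)) with hεdef
  set z : ℝ := (t/2) * (((n:ℝ)^2 * x)) ^ m with hzdef
  have hnx : (((n:ℝ)^2 * x)) ^ m = P * x ^ m := by rw [mul_pow, ← pow_mul]
  have hE : Real.exp (-s) ≤ E₀ := Real.exp_le_exp.mpr (by linarith)
  have hax : 0 < a - x := by linarith
  have sx : 0 < Real.sqrt x := Real.sqrt_pos.mpr hx0
  have sax : 0 < Real.sqrt (a - x) := Real.sqrt_pos.mpr hax
  have sa : 0 < Real.sqrt a := Real.sqrt_pos.mpr ha
  have sa2 : 0 < Real.sqrt (a/2) := Real.sqrt_pos.mpr (by linarith)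
  have sδ : 0 < Real.sqrt δ := Real.sqrt_pos.mpr hδ0
  have hxm : (0:ℝ) ≤ x ^ m := pow_nonneg hx0.le m
  have hsa_le : (Real.sqrt a)⁻¹ ≤ (Real.sqrt (a-x))⁻¹ := by
    apply inv_anti₀ sax
    exact Real.sqrt_le_sqrt (by linarith)
  have hFx : Real.log (1 + Real.exp (-s - P * Q x)) / Real.sqrt (x * (a - x))
      = G s (P * Q x) * ((Real.sqrt x)⁻¹ * (Real.sqrt (a-x))⁻¹) := by
    rw [div_eq_mul_inv, Real.sqrt_mul hx0.le, mul_inv]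
    rfl
  have hJx : (Real.sqrt (a * x))⁻¹ * G s (t * P * x ^ m)
      = G s (t * P * x ^ m) * ((Real.sqrt a)⁻¹ * (Real.sqrt x)⁻¹) := by
    rw [Real.sqrt_mul ha.le, mul_inv]
    ring
  rw [hFx, hJx]
  rw [show -(t/2) * (((n:ℝ)^2 * x)) ^ m = -z from by rw [hzdef]; ring]
  have piece1_nonneg : (0:ℝ) ≤ P * (C₁' * (Real.sqrt (a/2))⁻¹ *
      (x^m * Real.sqrt x * Real.exp (-z))) := by positivity
  have piece2_nonneg : (0:ℝ) ≤ (a * Real.sqrt (a/2))⁻¹ * (Real.sqrt x * Real.exp (-z)) := by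
    positivity
  have piece3_nonneg : (0:ℝ) ≤ 2 * (Real.sqrt δ)⁻¹ * εn * (Real.sqrt (a-x))⁻¹ := by positivity
  have hE₀pos : 0 < E₀ := Real.exp_pos _
  rcases le_or_gt x δ with hxδ | hxδ
  · -- x ≤ δ : Taylor region
    have hax2 : a/2 ≤ a - x := by linarith
    have hsax_le : (Real.sqrt (a-x))⁻¹ ≤ (Real.sqrt (a/2))⁻¹ := by
      apply inv_anti₀ sa2
      exact Real.sqrt_le_sqrt hax2
    have hQx := hQδ x hx0 hxδ
    have hQlow : (t/2) * x^m ≤ Q x := by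
      have h1 := (abs_le.mp hQx).1
      have hpow : x^(m+1) = x^m * x := pow_succ x m
      have hC₁'x : C₁' * x ≤ t/2 := by
        have := mul_le_mul_of_nonneg_left hxδ hC₁'pos.le
        linarith
      have h2 : C₁' * x^(m+1) = (C₁'*x) * x^m := by rw [hpow]; ring
      have h3 : (C₁'*x)*x^m ≤ (t/2)*x^m := mul_le_mul_of_nonneg_right hC₁'x hxm
      linarith
    set y₁ : ℝ := P * Q x with hy₁def
    set y₂ : ℝ := t * P * x ^ m with hy₂def
    have hy₂0 : 0 ≤ y₂ := by positivity
    have hminz : z ≤ min y₁ y₂ := by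
      rw [hzdef, hnx]
      apply le_min
      · calc (t/2)*(P*x^m) = P*((t/2)*x^m) := by ring
          _ ≤ P * Q x := mul_le_mul_of_nonneg_left hQlow hP0.le
      · have h0 : 0 ≤ P*x^m := mul_nonneg hP0.le hxm
        calc (t/2)*(P*x^m) ≤ t*(P*x^m) := mul_le_mul_of_nonneg_right (by linarith) h0
          _ = t*P*x^m := by ring
    have hexp_min : Real.exp (-s - min y₁ y₂) ≤ E₀ * Real.exp (-z) := by
      rw [show -s - min y₁ y₂ = -s + -(min y₁ y₂) by ring, Real.exp_add]
      apply mul_le_mul hE (Real.exp_le_exp.mpr (by linarith)) (Real.exp_pos _).le hE₀pos.le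
    have habs : |y₁ - y₂| ≤ P * (C₁' * x^(m+1)) := by
      have : y₁ - y₂ = P * (Q x - t * x^m) := by rw [hy₁def, hy₂def]; ring
      rw [this, abs_mul, abs_of_nonneg hP0.le]
      exact mul_le_mul_of_nonneg_left hQx hP0.le
    have hxid : x^(m+1) * (Real.sqrt x)⁻¹ = x^m * Real.sqrt x := by
      have hxx : x * (Real.sqrt x)⁻¹ = Real.sqrt x := by
        rw [← Real.mul_self_sqrt hx0.le]
        field_simp
        rw [Real.sqrt_sq sx.le]
      rw [pow_succ, mul_assoc, hxx]
    -- term 1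
    have t1 : |G s y₁ - G s y₂| * ((Real.sqrt x)⁻¹ * (Real.sqrt (a-x))⁻¹)
        ≤ E₀ * (P * (C₁' * (Real.sqrt (a/2))⁻¹ * (x^m * Real.sqrt x * Real.exp (-z)))) := by
      calc |G s y₁ - G s y₂| * ((Real.sqrt x)⁻¹ * (Real.sqrt (a-x))⁻¹)
          ≤ (Real.exp (-s - min y₁ y₂) * |y₁ - y₂|) * ((Real.sqrt x)⁻¹ * (Real.sqrt (a-x))⁻¹) := by
            apply mul_le_mul_of_nonneg_right (G_lipschitz s y₁ y₂) (by positivity)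
        _ ≤ ((E₀ * Real.exp (-z)) * (P * (C₁' * x^(m+1)))) *
              ((Real.sqrt x)⁻¹ * (Real.sqrt (a/2))⁻¹) := by
            apply mul_le_mul
            · exact mul_le_mul hexp_min habs (abs_nonneg _) (by positivity)
            · exact mul_le_mul_of_nonneg_left hsax_le (by positivity)
            · positivity
            · positivity
        _ = E₀ * (P * (C₁' * (Real.sqrt (a/2))⁻¹ *
              ((x^(m+1) * (Real.sqrt x)⁻¹) * Real.exp (-z)))) := by ring
        _ = E₀ * (P * (C₁' * (Real.sqrt (a/2))⁻¹ * (x^m * Real.sqrt x * Real.exp (-z)))) := by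
            rw [hxid]
    -- term 2
    have hGy₂ : G s y₂ ≤ E₀ * Real.exp (-z) := by
      calc G s y₂ ≤ Real.exp (-s - y₂) := G_le_exp s y₂
        _ ≤ E₀ * Real.exp (-z) := by
            rw [show -s - y₂ = -s + -y₂ by ring, Real.exp_add]
            apply mul_le_mul hE (Real.exp_le_exp.mpr ?_) (Real.exp_pos _).le hE₀pos.le
            have : z ≤ y₂ := le_trans hminz (min_le_right _ _)
            linarith
    have hdiff_nonneg : 0 ≤ (Real.sqrt (a-x))⁻¹ - (Real.sqrt a)⁻¹ := by linarith
    have hdiff : (Real.sqrt (a-x))⁻¹ - (Real.sqrt a)⁻¹ ≤ x * ((a * Real.sqrt (a/2)))⁻¹ := by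
      set u := Real.sqrt a
      set v := Real.sqrt (a-x)
      set w := Real.sqrt (a/2)
      have huu : u * u = a := Real.mul_self_sqrt ha.le
      have hvv : v * v = a - x := Real.mul_self_sqrt hax.le
      have hwv : w ≤ v := Real.sqrt_le_sqrt hax2
      have hvu : v ≤ u := Real.sqrt_le_sqrt (by linarith)
      have h1 : (u - v) * (u + v) = x := by linear_combination huu - hvv
      have h2 : v⁻¹ - u⁻¹ = (u - v) * (u * v)⁻¹ := by
        field_simp
      have h3 : (u - v) = x * (u + v)⁻¹ := by
        rw [eq_comm, mul_inv_eq_iff_eq_mul₀ (by positivity)]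
        linarith [h1]
      rw [h2, h3, mul_assoc, ← mul_inv]
      apply mul_le_mul_of_nonneg_left _ hx0.le
      apply inv_anti₀ (by positivity)
      calc a * w = (u*u)*w := by rw [huu]
        _ ≤ (u*u)*v := mul_le_mul_of_nonneg_left hwv (by positivity)
        _ = u*(u*v) := by ring
        _ ≤ (u+v)*(u*v) := mul_le_mul_of_nonneg_right (by linarith) (by positivity)
    have t2 : G s y₂ * ((Real.sqrt x)⁻¹ * ((Real.sqrt (a-x))⁻¹ - (Real.sqrt a)⁻¹))
        ≤ E₀ * ((a * Real.sqrt (a/2))⁻¹ * (Real.sqrt x * Real.exp (-z))) := by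
      have hxx : (Real.sqrt x)⁻¹ * x = Real.sqrt x := by
        rw [← Real.mul_self_sqrt hx0.le]
        field_simp
        rw [Real.sqrt_sq sx.le]
      calc G s y₂ * ((Real.sqrt x)⁻¹ * ((Real.sqrt (a-x))⁻¹ - (Real.sqrt a)⁻¹))
          ≤ (E₀ * Real.exp (-z)) * ((Real.sqrt x)⁻¹ * (x * ((a * Real.sqrt (a/2)))⁻¹)) := by
            apply mul_le_mul hGy₂
              (mul_le_mul_of_nonneg_left hdiff (by positivity))
              (by positivity) (by positivity)
        _ = E₀ * ((a * Real.sqrt (a/2))⁻¹ * (((Real.sqrt x)⁻¹ * x) * Real.exp (-z))) := by ring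
        _ = E₀ * ((a * Real.sqrt (a/2))⁻¹ * (Real.sqrt x * Real.exp (-z))) := by rw [hxx]
    -- combine
    have tri : |G s y₁ * ((Real.sqrt x)⁻¹ * (Real.sqrt (a-x))⁻¹)
          - G s y₂ * ((Real.sqrt a)⁻¹ * (Real.sqrt x)⁻¹)|
        ≤ |G s y₁ - G s y₂| * ((Real.sqrt x)⁻¹ * (Real.sqrt (a-x))⁻¹)
          + G s y₂ * ((Real.sqrt x)⁻¹ * ((Real.sqrt (a-x))⁻¹ - (Real.sqrt a)⁻¹)) := by
      have e1 : G s y₁ * ((Real.sqrt x)⁻¹ * (Real.sqrt (a-x))⁻¹)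
            - G s y₂ * ((Real.sqrt a)⁻¹ * (Real.sqrt x)⁻¹)
          = (G s y₁ - G s y₂) * ((Real.sqrt x)⁻¹ * (Real.sqrt (a-x))⁻¹)
            + G s y₂ * ((Real.sqrt x)⁻¹ * ((Real.sqrt (a-x))⁻¹ - (Real.sqrt a)⁻¹)) := by ring
      rw [e1]
      calc _ ≤ |(G s y₁ - G s y₂) * ((Real.sqrt x)⁻¹ * (Real.sqrt (a-x))⁻¹)|
            + |G s y₂ * ((Real.sqrt x)⁻¹ * ((Real.sqrt (a-x))⁻¹ - (Real.sqrt a)⁻¹))| :=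
          abs_add_le _ _
        _ = _ := by
          rw [abs_mul, abs_of_nonneg (show (0:ℝ) ≤ (Real.sqrt x)⁻¹ * (Real.sqrt (a-x))⁻¹ by positivity),
            abs_of_nonneg (mul_nonneg (G_nonneg s y₂) (mul_nonneg (by positivity) hdiff_nonneg))]
    calc |G s y₁ * ((Real.sqrt x)⁻¹ * (Real.sqrt (a-x))⁻¹)
          - G s y₂ * ((Real.sqrt a)⁻¹ * (Real.sqrt x)⁻¹)|
        ≤ |G s y₁ - G s y₂| * ((Real.sqrt x)⁻¹ * (Real.sqrt (a-x))⁻¹)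
          + G s y₂ * ((Real.sqrt x)⁻¹ * ((Real.sqrt (a-x))⁻¹ - (Real.sqrt a)⁻¹)) := tri
      _ ≤ E₀ * (P * (C₁' * (Real.sqrt (a/2))⁻¹ * (x^m * Real.sqrt x * Real.exp (-z))))
          + E₀ * ((a * Real.sqrt (a/2))⁻¹ * (Real.sqrt x * Real.exp (-z))) := add_le_add t1 t2
      _ ≤ _ := by
          rw [mul_add, mul_add]
          linarith [mul_nonneg hE₀pos.le piece3_nonneg]
  · -- δ < x : exponentially small region
    have hQx := hQc₀ x hxδ hxa
    have hsx_le : (Real.sqrt x)⁻¹ ≤ (Real.sqrt δ)⁻¹ := by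
      apply inv_anti₀ sδ
      exact Real.sqrt_le_sqrt hxδ.le
    have hbound : ∀ y : ℝ, c₀ * P ≤ y →
        G s y * ((Real.sqrt x)⁻¹ * (Real.sqrt (a-x))⁻¹)
          ≤ E₀ * εn * ((Real.sqrt δ)⁻¹ * (Real.sqrt (a-x))⁻¹) := by
      intro y hy
      have hG : G s y ≤ E₀ * εn := by
        calc G s y ≤ Real.exp (-s - y) := G_le_exp s y
          _ ≤ E₀ * εn := by
            rw [hεdef, ← Real.exp_add]
            apply Real.exp_le_exp.mpr
            linarith
      apply mul_le_mul hG (mul_le_mul_of_nonneg_right hsx_le (by positivity))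
        (by positivity) (by positivity)
    have hF_le : G s (P * Q x) * ((Real.sqrt x)⁻¹ * (Real.sqrt (a-x))⁻¹)
        ≤ E₀ * εn * ((Real.sqrt δ)⁻¹ * (Real.sqrt (a-x))⁻¹) := by
      apply hbound
      calc c₀ * P = P * c₀ := by ring
        _ ≤ P * Q x := mul_le_mul_of_nonneg_left hQx hP0.le
    have hJ_le : G s (t * P * x ^ m) * ((Real.sqrt a)⁻¹ * (Real.sqrt x)⁻¹)
        ≤ E₀ * εn * ((Real.sqrt δ)⁻¹ * (Real.sqrt (a-x))⁻¹) := by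
      have hG : G s (t * P * x ^ m) ≤ E₀ * εn := by
        calc G s (t * P * x ^ m) ≤ Real.exp (-s - t * P * x ^ m) := G_le_exp _ _
          _ ≤ E₀ * εn := by
            rw [hεdef, ← Real.exp_add]
            apply Real.exp_le_exp.mpr
            have hδm : δ ^ m ≤ x ^ m := pow_le_pow_left₀ hδ0.le hxδ.le m
            have h1 : c₀*P ≤ (t*δ^m)*P := mul_le_mul_of_nonneg_right hc₀δ hP0.le
            have h2 : (t*δ^m)*P ≤ (t*x^m)*P :=
              mul_le_mul_of_nonneg_right (mul_le_mul_of_nonneg_left hδm ht.le) hP0.le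
            have h3 : (t*x^m)*P = t*P*x^m := by ring
            linarith
      apply mul_le_mul hG ?_ (by positivity) (by positivity)
      exact le_trans (mul_le_mul hsa_le hsx_le (by positivity) (by positivity))
        (le_of_eq (mul_comm _ _))
    have tri : |G s (P * Q x) * ((Real.sqrt x)⁻¹ * (Real.sqrt (a-x))⁻¹)
          - G s (t * P * x ^ m) * ((Real.sqrt a)⁻¹ * (Real.sqrt x)⁻¹)|
        ≤ G s (P * Q x) * ((Real.sqrt x)⁻¹ * (Real.sqrt (a-x))⁻¹)
          + G s (t * P * x ^ m) * ((Real.sqrt a)⁻¹ * (Real.sqrt x)⁻¹) := by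
      have h1 : (0:ℝ) ≤ G s (P * Q x) * ((Real.sqrt x)⁻¹ * (Real.sqrt (a-x))⁻¹) :=
        mul_nonneg (G_nonneg _ _) (by positivity)
      have h2 : (0:ℝ) ≤ G s (t * P * x ^ m) * ((Real.sqrt a)⁻¹ * (Real.sqrt x)⁻¹) :=
        mul_nonneg (G_nonneg _ _) (by positivity)
      calc _ ≤ |G s (P * Q x) * ((Real.sqrt x)⁻¹ * (Real.sqrt (a-x))⁻¹)|
            + |G s (t * P * x ^ m) * ((Real.sqrt a)⁻¹ * (Real.sqrt x)⁻¹)| := (abs_sub_le _ 0 _).trans (le_of_eq (by rw [sub_zero, zero_sub, abs_neg]))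
        _ = _ := by rw [abs_of_nonneg h1, abs_of_nonneg h2]
    calc |G s (P * Q x) * ((Real.sqrt x)⁻¹ * (Real.sqrt (a-x))⁻¹)
          - G s (t * P * x ^ m) * ((Real.sqrt a)⁻¹ * (Real.sqrt x)⁻¹)|
        ≤ G s (P * Q x) * ((Real.sqrt x)⁻¹ * (Real.sqrt (a-x))⁻¹)
          + G s (t * P * x ^ m) * ((Real.sqrt a)⁻¹ * (Real.sqrt x)⁻¹) := tri
      _ ≤ E₀ * εn * ((Real.sqrt δ)⁻¹ * (Real.sqrt (a-x))⁻¹)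
          + E₀ * εn * ((Real.sqrt δ)⁻¹ * (Real.sqrt (a-x))⁻¹) := add_le_add hF_le hJ_le
      _ = Real.exp (-s₀) * (2 * (Real.sqrt δ)⁻¹ * εn * (Real.sqrt (a-x))⁻¹) := by ring
      _ ≤ _ := by
          rw [mul_add, mul_add]
          linarith [mul_nonneg hE₀pos.le piece1_nonneg, mul_nonneg hE₀pos.le piece2_nonneg]
set_option maxHeartbeats 4000000 in
set_option maxHeartbeats 4000000 in
/-- Asymptotics of the constant `p₀` of the global parametrix
(Proposition 5.2, first part). -/
theorem statement9 (a t : ℝ) (ha : 0 < a) (ht : 0 < t) (m : ℕ) (hm : 1 ≤ m)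
    (Q : ℝ → ℝ)
    (hQc : ContinuousOn Q (Set.Icc 0 a))
    (hQpos : ∀ x ∈ Set.Ioc (0 : ℝ) a, 0 < Q x)
    -- Q extends holomorphically near 0 with Q(z) = t z^m + O(z^{m+1})
    (hhol : ∃ (Qc : ℂ → ℂ) (r : ℝ), 0 < r ∧
      DifferentiableOn ℂ Qc (Metric.ball 0 r) ∧
      (∀ x : ℝ, 0 ≤ x → x < r → x ≤ a → Qc (x : ℂ) = ((Q x : ℝ) : ℂ)) ∧
      ∃ C₁ : ℝ, ∀ z ∈ Metric.ball (0 : ℂ) r,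
        ‖Qc z - (t : ℂ) * z ^ m‖ ≤ C₁ * ‖z‖ ^ (m + 1)) :
    ∀ s₀ : ℝ, ∃ (C : ℝ) (N : ℕ), 0 < C ∧
      ∀ n : ℕ, N ≤ n → ∀ s : ℝ, s₀ ≤ s →
        |(1 / (2 * Real.pi)) * (∫ x in Set.Ioo (0 : ℝ) a,
              Real.log (1 + Real.exp (-s - (n : ℝ) ^ (2 * m) * Q x)) / Real.sqrt (x * (a - x))) -
            ((a ^ (-(1 : ℝ) / 2) * t ^ (-(1 / (2 * (m : ℝ)))) / (2 * Real.pi * m)) *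
              Fbeta (1 / (2 * (m : ℝ)) - 1) s) / n|
          ≤ C / (n : ℝ) ^ 3 := by
  obtain ⟨Qc, r, hr, -, hQcr, C₁, hC₁⟩ := hhol
  intro s₀
  set C₁' : ℝ := max C₁ 1 with hC₁'def
  have hC₁'pos : (0:ℝ) < C₁' := lt_of_lt_of_le one_pos (le_max_right _ _)
  have hQreal : ∀ x : ℝ, 0 ≤ x → x < r → x ≤ a → |Q x - t * x ^ m| ≤ C₁' * x ^ (m+1) := by
    intro x hx hxr hxa
    have hball : (x:ℂ) ∈ Metric.ball (0:ℂ) r := by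
      rw [Metric.mem_ball, dist_zero_right, Complex.norm_real, Real.norm_eq_abs]
      rwa [abs_of_nonneg hx]
    have h := hC₁ (x:ℂ) hball
    rw [hQcr x hx hxr hxa] at h
    have h1 : ((Q x : ℝ) : ℂ) - (t:ℂ) * (x:ℂ)^m = (((Q x - t * x^m : ℝ)):ℂ) := by
      push_cast; ring
    rw [h1, Complex.norm_real, Real.norm_eq_abs] at h
    have h2 : ‖(x:ℂ)‖ = x := by rw [Complex.norm_real, Real.norm_eq_abs, abs_of_nonneg hx]
    rw [h2] at h
    calc |Q x - t*x^m| ≤ C₁ * x^(m+1) := h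
      _ ≤ C₁' * x^(m+1) := mul_le_mul_of_nonneg_right (le_max_left _ _) (pow_nonneg hx _)
  set δ : ℝ := min (min (a/2) (r/2)) (t/(2*C₁')) with hδdef
  have hδ0 : 0 < δ := by
    apply lt_min (lt_min (by linarith) (by linarith))
    positivity
  have hδa2 : δ ≤ a/2 := le_trans (min_le_left _ _) (min_le_left _ _)
  have hδr : δ < r :=
    lt_of_le_of_lt (le_trans (min_le_left _ _) (min_le_right _ _)) (by linarith)
  have hδt : C₁' * δ ≤ t/2 := by
    have h := min_le_right (min (a/2) (r/2)) (t/(2*C₁'))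
    calc C₁' * δ ≤ C₁' * (t/(2*C₁')) := mul_le_mul_of_nonneg_left h hC₁'pos.le
      _ = t/2 := by field_simp
  have hδa : δ < a := by linarith
  have hQδ : ∀ x : ℝ, 0 < x → x ≤ δ → |Q x - t * x ^ m| ≤ C₁' * x ^ (m+1) :=
    fun x hx0 hxδ => hQreal x hx0.le (lt_of_le_of_lt hxδ hδr) (by linarith)
  obtain ⟨x₀, hx₀mem, hx₀min⟩ := isCompact_Icc.exists_isMinOn (Set.nonempty_Icc.mpr hδa.le)
      (hQc.mono (Icc_subset_Icc hδ0.le le_rfl))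
  have hcpos : 0 < Q x₀ := hQpos x₀ ⟨lt_of_lt_of_le hδ0 hx₀mem.1, hx₀mem.2⟩
  set c₀ : ℝ := min (min (Q x₀) (t * δ^m)) ((t/2) * a^m) with hc₀def
  have hc₀pos : 0 < c₀ := lt_min (lt_min hcpos (by positivity)) (by positivity)
  have hc₀Q : ∀ x : ℝ, δ < x → x < a → c₀ ≤ Q x := by
    intro x h1 h2
    calc c₀ ≤ Q x₀ := le_trans (min_le_left _ _) (min_le_left _ _)
      _ ≤ Q x := isMinOn_iff.mp hx₀min x ⟨h1.le, h2.le⟩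
  have hc₀δ : c₀ ≤ t * δ^m := le_trans (min_le_left _ _) (min_le_right _ _)
  have hc₀a : c₀ ≤ (t/2) * a^m := min_le_right _ _
  set E₀ : ℝ := Real.exp (-s₀) with hE₀def
  have hE₀pos : 0 < E₀ := Real.exp_pos _
  set K₁ : ℝ := C₁' * (Real.sqrt (a/2))⁻¹ with hK₁def
  set K₂ : ℝ := (a * Real.sqrt (a/2))⁻¹ with hK₂def
  set K₃ : ℝ := 2 * (Real.sqrt δ)⁻¹ with hK₃def
  have hb2 : (0:ℝ) < t/2 := by linarith
  set A₁ : ℝ := ∫ u in Ioi (0:ℝ), u ^ ((m:ℝ)+1/2) * Real.exp (-(t/2) * u ^ m) with hA₁def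
  set A₂ : ℝ := ∫ u in Ioi (0:ℝ), u ^ ((1:ℝ)/2) * Real.exp (-(t/2) * u ^ m) with hA₂def
  set A₃ : ℝ := ∫ u in Ioi (0:ℝ), Real.exp (-(t/2) * u ^ m) with hA₃def
  set B₃ : ℝ := ∫ x in Ioo (0:ℝ) a, (Real.sqrt (a - x))⁻¹ with hB₃def
  have hA₁0 : 0 ≤ A₁ := setIntegral_nonneg measurableSet_Ioi fun x hx => by
    have : (0:ℝ) < x := hx; positivity
  have hA₂0 : 0 ≤ A₂ := setIntegral_nonneg measurableSet_Ioi fun x hx => by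
    have : (0:ℝ) < x := hx; positivity
  have hA₃0 : 0 ≤ A₃ := setIntegral_nonneg measurableSet_Ioi fun x hx => (Real.exp_pos _).le
  have hB₃0 : 0 ≤ B₃ := setIntegral_nonneg measurableSet_Ioo fun x hx => by positivity
  have hK₁0 : 0 ≤ K₁ := by positivity
  have hK₂0 : 0 ≤ K₂ := by positivity
  have hK₃0 : 0 ≤ K₃ := by positivity
  have hSnn : 0 ≤ K₁*A₁ + K₂*A₂ + (K₃*B₃ + A₃/a) * (27/c₀^3) := by
    have h1 := mul_nonneg hK₁0 hA₁0
    have h2 := mul_nonneg hK₂0 hA₂0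
    have h3 : 0 ≤ (K₃*B₃ + A₃/a) * (27/c₀^3) :=
      mul_nonneg (add_nonneg (mul_nonneg hK₃0 hB₃0) (div_nonneg hA₃0 ha.le)) (by positivity)
    linarith
  refine ⟨1 + E₀ * (K₁*A₁ + K₂*A₂ + (K₃*B₃ + A₃/a) * (27/c₀^3)), 1, ?_, ?_⟩
  · have := mul_nonneg hE₀pos.le hSnn
    linarith
  intro n hn s hs
  have hn1 : (1:ℝ) ≤ (n:ℝ) := by exact_mod_cast hn
  have hnpos : (0:ℝ) < n := by linarith
  have hP1 : (1:ℝ) ≤ (n:ℝ)^(2*m) := one_le_pow₀ hn1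
  have hP0 : (0:ℝ) < (n:ℝ)^(2*m) := by linarith
  -- rewrite the p∞ term via the change of variables identity
  have hkey := key_identity_s9 a t ha ht m hm n hn s
  have hrw : (a ^ (-(1:ℝ)/2) * t ^ (-(1/(2*(m:ℝ)))) / (2*Real.pi*(m:ℝ)) *
        Fbeta (1/(2*(m:ℝ)) - 1) s) / (n:ℝ)
      = (1/(2*Real.pi)) * ∫ x in Ioi (0:ℝ),
          (Real.sqrt (a*x))⁻¹ * G s (t * (n:ℝ)^(2*m) * x ^ m) := by
    rw [hkey]; ring
  rw [hrw, ← mul_sub, abs_mul]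
  have h2π : |1/(2*Real.pi)| ≤ 1 := by
    rw [abs_of_nonneg (by positivity), div_le_one (by positivity)]
    linarith [Real.pi_gt_three]
  have main_est :
      |(∫ x in Set.Ioo (0:ℝ) a,
          Real.log (1 + Real.exp (-s - (n:ℝ) ^ (2*m) * Q x)) / Real.sqrt (x * (a - x)))
        - ∫ x in Ioi (0:ℝ), (Real.sqrt (a*x))⁻¹ * G s (t * (n:ℝ)^(2*m) * x ^ m)|
      ≤ (1 + E₀ * (K₁*A₁ + K₂*A₂ + (K₃*B₃ + A₃/a) * (27/c₀^3))) / (n:ℝ)^3 := by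
    -- continuity and integrability facts
    have hGScont : Continuous (G s) := G_cont s
    have hsq_cont : Continuous fun x : ℝ => Real.sqrt (x * (a - x)) :=
      Real.continuous_sqrt.comp (by fun_prop)
    have hFcont : ContinuousOn (fun x => Real.log (1 + Real.exp (-s - (n:ℝ)^(2*m) * Q x)) /
        Real.sqrt (x * (a-x))) (Ioo 0 a) := by
      apply ContinuousOn.div
      · exact hGScont.comp_continuousOn (continuousOn_const.mul (hQc.mono Ioo_subset_Icc_self))
      · exact hsq_cont.continuousOn
      · intro x hx
        have : (0:ℝ) < x * (a - x) := mul_pos hx.1 (by linarith [hx.2])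
        exact (Real.sqrt_pos.mpr this).ne'
    have hWint : IntegrableOn (fun x => (Real.sqrt x)⁻¹ * (Real.sqrt (a-x))⁻¹) (Ioo 0 a) := by
      have hgint : IntegrableOn
          (fun x => (Real.sqrt (a/2))⁻¹ * ((Real.sqrt x)⁻¹ + (Real.sqrt (a-x))⁻¹)) (Ioo 0 a) :=
        ((integrableOn_inv_sqrt ha).add (integrableOn_inv_sqrt_sub ha)).const_mul _
      apply Integrable.mono' hgint ?_ ?_
      · apply ContinuousOn.aestronglyMeasurable ?_ measurableSet_Ioo
        apply ContinuousOn.mul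
        · apply ContinuousOn.inv₀ Real.continuous_sqrt.continuousOn
          intro x hx; exact (Real.sqrt_pos.mpr hx.1).ne'
        · apply ContinuousOn.inv₀ (Real.continuous_sqrt.comp (by fun_prop)).continuousOn
          intro x hx
          exact (Real.sqrt_pos.mpr (by linarith [hx.2] : (0:ℝ) < a - x)).ne'
      · refine (ae_restrict_iff' measurableSet_Ioo).mpr (ae_of_all _ ?_)
        intro x hx
        have sx : 0 < Real.sqrt x := Real.sqrt_pos.mpr hx.1
        have sax : 0 < Real.sqrt (a-x) := Real.sqrt_pos.mpr (by linarith [hx.2])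
        have sa2 : 0 < Real.sqrt (a/2) := Real.sqrt_pos.mpr (by linarith)
        rw [Real.norm_eq_abs, abs_of_nonneg (by positivity)]
        rcases le_total x (a/2) with h | h
        · have h1 : (Real.sqrt (a-x))⁻¹ ≤ (Real.sqrt (a/2))⁻¹ :=
            inv_anti₀ sa2 (Real.sqrt_le_sqrt (by linarith))
          have h2 : (0:ℝ) ≤ (Real.sqrt (a/2))⁻¹ * (Real.sqrt (a-x))⁻¹ := by positivity
          have h3 : (Real.sqrt x)⁻¹ * (Real.sqrt (a-x))⁻¹ ≤ (Real.sqrt x)⁻¹ * (Real.sqrt (a/2))⁻¹ :=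
            mul_le_mul_of_nonneg_left h1 (by positivity)
          have h4 : (Real.sqrt x)⁻¹ * (Real.sqrt (a/2))⁻¹
              = (Real.sqrt (a/2))⁻¹ * (Real.sqrt x)⁻¹ := mul_comm _ _
          rw [mul_add]
          linarith
        · have h1 : (Real.sqrt x)⁻¹ ≤ (Real.sqrt (a/2))⁻¹ :=
            inv_anti₀ sa2 (Real.sqrt_le_sqrt (by linarith))
          have h2 : (0:ℝ) ≤ (Real.sqrt (a/2))⁻¹ * (Real.sqrt x)⁻¹ := by positivity
          have h3 : (Real.sqrt x)⁻¹ * (Real.sqrt (a-x))⁻¹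
              ≤ (Real.sqrt (a/2))⁻¹ * (Real.sqrt (a-x))⁻¹ :=
            mul_le_mul_of_nonneg_right h1 (by positivity)
          rw [mul_add]
          linarith
    have hFint : IntegrableOn (fun x => Real.log (1 + Real.exp (-s - (n:ℝ)^(2*m) * Q x)) /
        Real.sqrt (x * (a-x))) (Ioo 0 a) := by
      apply Integrable.mono' (hWint.const_mul E₀) (hFcont.aestronglyMeasurable measurableSet_Ioo)
      refine (ae_restrict_iff' measurableSet_Ioo).mpr (ae_of_all _ ?_)
      intro x hx
      have hQx0 : 0 < Q x := hQpos x ⟨hx.1, hx.2.le⟩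
      have hGle : Real.log (1 + Real.exp (-s - (n:ℝ)^(2*m) * Q x)) ≤ E₀ := by
        have hprod := mul_pos hP0 hQx0
        calc Real.log (1 + Real.exp (-s - (n:ℝ)^(2*m) * Q x))
            ≤ Real.exp (-s - (n:ℝ)^(2*m) * Q x) := G_le_exp s _
          _ ≤ E₀ := Real.exp_le_exp.mpr (by linarith)
      have hnn : (0:ℝ) ≤ Real.log (1 + Real.exp (-s - (n:ℝ)^(2*m) * Q x)) := G_nonneg s _
      rw [Real.norm_eq_abs, abs_of_nonneg (div_nonneg hnn (Real.sqrt_nonneg _)),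
        div_eq_mul_inv, Real.sqrt_mul hx.1.le, mul_inv]
      exact mul_le_mul hGle le_rfl (by positivity) hE₀pos.le
    have hJcont : ContinuousOn (fun x => (Real.sqrt (a*x))⁻¹ *
        G s (t * (n:ℝ)^(2*m) * x ^ m)) (Ioi 0) := by
      apply ContinuousOn.mul
      · apply ContinuousOn.inv₀ (Real.continuous_sqrt.comp (by fun_prop)).continuousOn
        intro x hx; exact (Real.sqrt_pos.mpr (mul_pos ha hx)).ne'
      · exact (hGScont.comp (by fun_prop)).continuousOn
    have hJint : IntegrableOn (fun x => (Real.sqrt (a*x))⁻¹ *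
        G s (t * (n:ℝ)^(2*m) * x ^ m)) (Ioi 0) := by
      have hb : (0:ℝ) < t * (n:ℝ)^(2*m) := by positivity
      have hbase := (integrableOn_pow_exp m hm (q := -(1:ℝ)/2) (by norm_num) hb).const_mul
          ((Real.sqrt a)⁻¹ * E₀)
      apply Integrable.mono' hbase (hJcont.aestronglyMeasurable measurableSet_Ioi)
      refine (ae_restrict_iff' measurableSet_Ioi).mpr (ae_of_all _ ?_)
      intro x hx
      have hx0 : (0:ℝ) < x := hx
      rw [Real.norm_eq_abs, abs_of_nonneg (mul_nonneg (by positivity) (G_nonneg _ _))]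
      have e1 : (Real.sqrt (a*x))⁻¹ = (Real.sqrt a)⁻¹ * x ^ (-(1:ℝ)/2) := by
        rw [Real.sqrt_mul ha.le, mul_inv, sqrt_inv_eq_rpow hx0.le]
      have e2 : G s (t * (n:ℝ)^(2*m) * x ^ m)
          ≤ E₀ * Real.exp (-(t * (n:ℝ)^(2*m)) * x^m) := by
        calc G s (t * (n:ℝ)^(2*m) * x ^ m)
            ≤ Real.exp (-s - t * (n:ℝ)^(2*m) * x ^ m) := G_le_exp _ _
          _ = Real.exp (-s) * Real.exp (-(t * (n:ℝ)^(2*m)) * x^m) := by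
              rw [← Real.exp_add]; ring_nf
          _ ≤ E₀ * Real.exp (-(t * (n:ℝ)^(2*m)) * x^m) :=
              mul_le_mul_of_nonneg_right (Real.exp_le_exp.mpr (by linarith))
                (Real.exp_pos _).le
      calc (Real.sqrt (a*x))⁻¹ * G s (t * (n:ℝ)^(2*m) * x ^ m)
          ≤ (Real.sqrt (a*x))⁻¹ * (E₀ * Real.exp (-(t * (n:ℝ)^(2*m)) * x^m)) :=
            mul_le_mul_of_nonneg_left e2 (by positivity)
        _ = (Real.sqrt a)⁻¹ * E₀ * (x ^ (-(1:ℝ)/2) * Real.exp (-(t * (n:ℝ)^(2*m)) * x^m)) := by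
            rw [e1]; ring
    have hJIoo : IntegrableOn (fun x => (Real.sqrt (a*x))⁻¹ *
        G s (t * (n:ℝ)^(2*m) * x ^ m)) (Ioo 0 a) := hJint.mono_set (fun x hx => hx.1)
    have hJIci : IntegrableOn (fun x => (Real.sqrt (a*x))⁻¹ *
        G s (t * (n:ℝ)^(2*m) * x ^ m)) (Ici a) :=
      hJint.mono_set (fun x hx => lt_of_lt_of_le ha hx)
    have hdisj : Disjoint (Ioo (0:ℝ) a) (Ici a) := by
      rw [Set.disjoint_left]
      intro x hx hx'
      exact absurd hx' (not_le.mpr hx.2)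
    have hsplit : (∫ x in Ioi (0:ℝ), (Real.sqrt (a*x))⁻¹ * G s (t * (n:ℝ)^(2*m) * x ^ m))
        = (∫ x in Ioo (0:ℝ) a, (Real.sqrt (a*x))⁻¹ * G s (t * (n:ℝ)^(2*m) * x ^ m))
          + ∫ x in Ici a, (Real.sqrt (a*x))⁻¹ * G s (t * (n:ℝ)^(2*m) * x ^ m) := by
      rw [← Set.Ioo_union_Ici_eq_Ioi ha, setIntegral_union hdisj measurableSet_Ici hJIoo hJIci]
    -- scaled integrals
    have hq1 : (-1:ℝ) < (m:ℝ)+1/2 := by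
      have : (0:ℝ) ≤ (m:ℝ) := Nat.cast_nonneg m
      linarith
    have hbase1_rpow := integrableOn_pow_exp_scaled m hm (q := (m:ℝ)+1/2) hq1 hb2 hn
    have hbase1eq : EqOn (fun x:ℝ => x ^ ((m:ℝ)+1/2) * Real.exp (-(t/2)*(((n:ℝ)^2*x))^m))
        (fun x:ℝ => x^m * Real.sqrt x * Real.exp (-(t/2)*(((n:ℝ)^2*x))^m)) (Ioi 0) := by
      intro x hx
      have hx0 : (0:ℝ) < x := hx
      simp only
      congr 1
      rw [Real.sqrt_eq_rpow, ← Real.rpow_natCast x m, ← Real.rpow_add hx0]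
    have hbase1 := hbase1_rpow.congr_fun hbase1eq measurableSet_Ioi
    have hbase1val : (∫ x in Ioi (0:ℝ), x^m * Real.sqrt x * Real.exp (-(t/2)*(((n:ℝ)^2*x))^m))
        = ((n:ℝ)^2) ^ (-((m:ℝ)+1/2)-1) * A₁ := by
      rw [← setIntegral_congr_fun measurableSet_Ioi hbase1eq, scaling m hb2 hn, ← hA₁def]
    have hq2 : (-1:ℝ) < (1:ℝ)/2 := by norm_num
    have hbase2_rpow := integrableOn_pow_exp_scaled m hm (q := (1:ℝ)/2) hq2 hb2 hn
    have hbase2eq : EqOn (fun x:ℝ => x ^ ((1:ℝ)/2) * Real.exp (-(t/2)*(((n:ℝ)^2*x))^m))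
        (fun x:ℝ => Real.sqrt x * Real.exp (-(t/2)*(((n:ℝ)^2*x))^m)) (Ioi 0) := by
      intro x hx
      simp only
      congr 1
      rw [Real.sqrt_eq_rpow]
    have hbase2 := hbase2_rpow.congr_fun hbase2eq measurableSet_Ioi
    have hbase2val : (∫ x in Ioi (0:ℝ), Real.sqrt x * Real.exp (-(t/2)*(((n:ℝ)^2*x))^m))
        = ((n:ℝ)^2) ^ (-((1:ℝ)/2)-1) * A₂ := by
      rw [← setIntegral_congr_fun measurableSet_Ioi hbase2eq, scaling m hb2 hn, ← hA₂def]
    have hbase1Ioo := hbase1.mono_set (Set.Ioo_subset_Ioi_self : Ioo (0:ℝ) a ⊆ Ioi 0)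
    have hbase2Ioo := hbase2.mono_set (Set.Ioo_subset_Ioi_self : Ioo (0:ℝ) a ⊆ Ioi 0)
    have hbase3 := integrableOn_inv_sqrt_sub ha
    set εn : ℝ := Real.exp (-(c₀ * (n:ℝ)^(2*m))) with hεdef
    have hεpos : 0 < εn := Real.exp_pos _
    -- pointwise bound
    have hHbound : ∀ x ∈ Ioo (0:ℝ) a,
        |Real.log (1 + Real.exp (-s - (n:ℝ) ^ (2*m) * Q x)) / Real.sqrt (x * (a - x))
          - (Real.sqrt (a*x))⁻¹ * G s (t * (n:ℝ)^(2*m) * x ^ m)|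
        ≤ E₀ * ((n:ℝ)^(2*m) * (K₁ * (x^m * Real.sqrt x * Real.exp (-(t/2) * (((n:ℝ)^2 * x)) ^ m)))
            + K₂ * (Real.sqrt x * Real.exp (-(t/2) * (((n:ℝ)^2 * x)) ^ m))
            + K₃ * εn * (Real.sqrt (a-x))⁻¹) := by
      intro x hx
      exact pointwise_bound a t ha ht m hm Q s₀ s hs C₁' δ c₀ hC₁'pos hδ0 hδa2 hδt hQδ hc₀Q
        hc₀δ hc₀pos n hn x hx.1 hx.2
    have hp1int : IntegrableOn (fun x:ℝ => (n:ℝ)^(2*m) *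
        (K₁ * (x^m * Real.sqrt x * Real.exp (-(t/2) * (((n:ℝ)^2 * x)) ^ m)))) (Ioo 0 a) :=
      (hbase1Ioo.const_mul K₁).const_mul _
    have hp2int : IntegrableOn (fun x:ℝ =>
        K₂ * (Real.sqrt x * Real.exp (-(t/2) * (((n:ℝ)^2 * x)) ^ m))) (Ioo 0 a) :=
      hbase2Ioo.const_mul K₂
    have hp3int : IntegrableOn (fun x:ℝ => K₃ * εn * (Real.sqrt (a-x))⁻¹) (Ioo 0 a) :=
      hbase3.const_mul _
    have hHint : IntegrableOn (fun x:ℝ => E₀ *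
        ((n:ℝ)^(2*m) * (K₁ * (x^m * Real.sqrt x * Real.exp (-(t/2) * (((n:ℝ)^2 * x)) ^ m)))
          + K₂ * (Real.sqrt x * Real.exp (-(t/2) * (((n:ℝ)^2 * x)) ^ m))
          + K₃ * εn * (Real.sqrt (a-x))⁻¹)) (Ioo 0 a) :=
      ((hp1int.add hp2int).add hp3int).const_mul E₀
    have hE1 : |(∫ x in Ioo (0:ℝ) a,
          Real.log (1 + Real.exp (-s - (n:ℝ) ^ (2*m) * Q x)) / Real.sqrt (x * (a - x)))
        - ∫ x in Ioo (0:ℝ) a, (Real.sqrt (a*x))⁻¹ * G s (t * (n:ℝ)^(2*m) * x ^ m)|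
        ≤ ∫ x in Ioo (0:ℝ) a, E₀ *
        ((n:ℝ)^(2*m) * (K₁ * (x^m * Real.sqrt x * Real.exp (-(t/2) * (((n:ℝ)^2 * x)) ^ m)))
          + K₂ * (Real.sqrt x * Real.exp (-(t/2) * (((n:ℝ)^2 * x)) ^ m))
          + K₃ * εn * (Real.sqrt (a-x))⁻¹) := by
      rw [← integral_sub hFint hJIoo, ← Real.norm_eq_abs]
      apply norm_integral_le_of_norm_le hHint
      refine (ae_restrict_iff' measurableSet_Ioo).mpr (ae_of_all _ ?_)
      intro x hx
      rw [Real.norm_eq_abs]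
      exact hHbound x hx
    -- value of the H integral
    have hIoo_int1 : (∫ x in Ioo (0:ℝ) a,
          x^m * Real.sqrt x * Real.exp (-(t/2) * (((n:ℝ)^2 * x)) ^ m))
        ≤ ((n:ℝ)^2) ^ (-((m:ℝ)+1/2)-1) * A₁ := by
      rw [← hbase1val]
      apply setIntegral_mono_set hbase1 ?_ (HasSubset.Subset.eventuallyLE (Set.Ioo_subset_Ioi_self : Ioo (0:ℝ) a ⊆ Ioi 0))
      refine (ae_restrict_iff' measurableSet_Ioi).mpr (ae_of_all _ ?_)
      intro x hx
      have : (0:ℝ) < x := hx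
      positivity
    have hIoo_int2 : (∫ x in Ioo (0:ℝ) a,
          Real.sqrt x * Real.exp (-(t/2) * (((n:ℝ)^2 * x)) ^ m))
        ≤ ((n:ℝ)^2) ^ (-((1:ℝ)/2)-1) * A₂ := by
      rw [← hbase2val]
      apply setIntegral_mono_set hbase2 ?_ (HasSubset.Subset.eventuallyLE (Set.Ioo_subset_Ioi_self : Ioo (0:ℝ) a ⊆ Ioi 0))
      refine (ae_restrict_iff' measurableSet_Ioi).mpr (ae_of_all _ ?_)
      intro x hx
      positivity
    have hHval : (∫ x in Ioo (0:ℝ) a, E₀ *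
        ((n:ℝ)^(2*m) * (K₁ * (x^m * Real.sqrt x * Real.exp (-(t/2) * (((n:ℝ)^2 * x)) ^ m)))
          + K₂ * (Real.sqrt x * Real.exp (-(t/2) * (((n:ℝ)^2 * x)) ^ m))
          + K₃ * εn * (Real.sqrt (a-x))⁻¹))
        ≤ E₀ * ((n:ℝ)^(2*m) * (K₁ * (((n:ℝ)^2) ^ (-((m:ℝ)+1/2)-1) * A₁))
          + K₂ * (((n:ℝ)^2) ^ (-((1:ℝ)/2)-1) * A₂) + K₃ * εn * B₃) := by
      have hp12int : IntegrableOn (fun x:ℝ =>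
          (n:ℝ)^(2*m) * (K₁ * (x^m * Real.sqrt x * Real.exp (-(t/2) * (((n:ℝ)^2 * x)) ^ m)))
          + K₂ * (Real.sqrt x * Real.exp (-(t/2) * (((n:ℝ)^2 * x)) ^ m))) (Ioo 0 a) :=
        hp1int.add hp2int
      rw [integral_const_mul, integral_add hp12int hp3int, integral_add hp1int hp2int]
      apply mul_le_mul_of_nonneg_left ?_ hE₀pos.le
      have b1 : (∫ x in Ioo (0:ℝ) a, (n:ℝ)^(2*m) *
            (K₁ * (x^m * Real.sqrt x * Real.exp (-(t/2) * (((n:ℝ)^2 * x)) ^ m))))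
          ≤ (n:ℝ)^(2*m) * (K₁ * (((n:ℝ)^2) ^ (-((m:ℝ)+1/2)-1) * A₁)) := by
        rw [integral_const_mul, integral_const_mul]
        exact mul_le_mul_of_nonneg_left (mul_le_mul_of_nonneg_left hIoo_int1 hK₁0) hP0.le
      have b2 : (∫ x in Ioo (0:ℝ) a,
            K₂ * (Real.sqrt x * Real.exp (-(t/2) * (((n:ℝ)^2 * x)) ^ m)))
          ≤ K₂ * (((n:ℝ)^2) ^ (-((1:ℝ)/2)-1) * A₂) := by
        rw [integral_const_mul]
        exact mul_le_mul_of_nonneg_left hIoo_int2 hK₂0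
      have b3 : (∫ x in Ioo (0:ℝ) a, K₃ * εn * (Real.sqrt (a-x))⁻¹) = K₃ * εn * B₃ := by
        rw [integral_const_mul, ← hB₃def]
      linarith
    -- tail bound
    have hA₃int : IntegrableOn (fun x:ℝ => Real.exp (-(t/2)*x^m)) (Ioi 0) := by
      have h := integrableOn_pow_exp m hm (q := (0:ℝ)) (by norm_num) hb2
      apply h.congr_fun ?_ measurableSet_Ioi
      intro x hx
      simp [Real.rpow_zero]
    have hIci_sub : Ici a ⊆ Ioi (0:ℝ) := fun x hx => lt_of_lt_of_le ha hx
    have htail : |∫ x in Ici a, (Real.sqrt (a*x))⁻¹ * G s (t * (n:ℝ)^(2*m) * x ^ m)|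
        ≤ E₀ * εn / a * A₃ := by
      rw [← Real.norm_eq_abs]
      have hgint : IntegrableOn (fun x:ℝ => (E₀*εn/a) * Real.exp (-(t/2)*x^m)) (Ici a) :=
        (hA₃int.mono_set hIci_sub).const_mul _
      calc ‖∫ x in Ici a, (Real.sqrt (a*x))⁻¹ * G s (t * (n:ℝ)^(2*m) * x ^ m)‖
          ≤ ∫ x in Ici a, (E₀*εn/a) * Real.exp (-(t/2)*x^m) := by
            apply norm_integral_le_of_norm_le hgint
            refine (ae_restrict_iff' measurableSet_Ici).mpr (ae_of_all _ ?_)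
            intro x hx
            have hx0 : (0:ℝ) < x := lt_of_lt_of_le ha hx
            rw [Real.norm_eq_abs, abs_of_nonneg (mul_nonneg (by positivity) (G_nonneg _ _))]
            have h1 : (Real.sqrt (a*x))⁻¹ ≤ a⁻¹ := by
              apply inv_anti₀ ha
              calc a = Real.sqrt (a*a) := by rw [Real.sqrt_mul_self ha.le]
                _ ≤ Real.sqrt (a*x) :=
                  Real.sqrt_le_sqrt (mul_le_mul_of_nonneg_left hx ha.le)
            have h2 : G s (t * (n:ℝ)^(2*m) * x ^ m) ≤ E₀ * εn * Real.exp (-(t/2)*x^m) := by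
              calc G s (t * (n:ℝ)^(2*m) * x ^ m)
                  ≤ Real.exp (-s - t * (n:ℝ)^(2*m) * x ^ m) := G_le_exp _ _
                _ ≤ Real.exp (-s₀ + -(c₀*(n:ℝ)^(2*m)) + -(t/2)*x^m) := by
                    apply Real.exp_le_exp.mpr
                    have ham : a^m ≤ x^m := pow_le_pow_left₀ ha.le hx m
                    have hc1 : c₀*(n:ℝ)^(2*m) ≤ ((t/2)*x^m)*(n:ℝ)^(2*m) :=
                      mul_le_mul_of_nonneg_right
                        (le_trans hc₀a (mul_le_mul_of_nonneg_left ham hb2.le)) hP0.le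
                    have hc2 : (t/2)*x^m ≤ ((t/2)*x^m)*(n:ℝ)^(2*m) :=
                      le_mul_of_one_le_right (by positivity) hP1
                    have he : ((t/2)*x^m)*(n:ℝ)^(2*m) + ((t/2)*x^m)*(n:ℝ)^(2*m)
                        = t*(n:ℝ)^(2*m)*x^m := by ring
                    linarith
                _ = E₀ * εn * Real.exp (-(t/2)*x^m) := by
                    rw [hE₀def, hεdef, ← Real.exp_add, ← Real.exp_add]
            calc (Real.sqrt (a*x))⁻¹ * G s (t * (n:ℝ)^(2*m) * x ^ m)
                ≤ a⁻¹ * (E₀ * εn * Real.exp (-(t/2)*x^m)) :=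
                  mul_le_mul h1 h2 (G_nonneg _ _) (by positivity)
              _ = (E₀*εn/a) * Real.exp (-(t/2)*x^m) := by ring
        _ = (E₀*εn/a) * ∫ x in Ici a, Real.exp (-(t/2)*x^m) := integral_const_mul _ _
        _ ≤ E₀ * εn / a * A₃ := by
            apply mul_le_mul_of_nonneg_left ?_
              (div_nonneg (mul_nonneg hE₀pos.le hεpos.le) ha.le)
            rw [hA₃def]
            apply setIntegral_mono_set hA₃int ?_ (HasSubset.Subset.eventuallyLE hIci_sub)
            exact ae_of_all _ fun x => (Real.exp_pos _).le
    -- numerics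
    have hPn : (n:ℝ) ≤ (n:ℝ)^(2*m) := by
      calc (n:ℝ) = (n:ℝ)^1 := (pow_one _).symm
        _ ≤ (n:ℝ)^(2*m) := pow_le_pow_right₀ hn1 (by omega)
    have hεbound : εn ≤ 27/c₀^3 * ((n:ℝ)^3)⁻¹ := by
      have h1 : c₀ * (n:ℝ) ≤ c₀ * (n:ℝ)^(2*m) := mul_le_mul_of_nonneg_left hPn hc₀pos.le
      calc εn ≤ Real.exp (-(c₀*(n:ℝ))) := by
            rw [hεdef]
            exact Real.exp_le_exp.mpr (by linarith)
        _ ≤ 27/(c₀*(n:ℝ))^3 := exp_neg_le (by positivity)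
        _ = 27/c₀^3 * ((n:ℝ)^3)⁻¹ := by
            rw [mul_pow, ← div_div, div_eq_mul_inv (27/c₀^3)]
    have hsq : ∀ qq : ℝ, ((n:ℝ)^2) ^ qq = (n:ℝ) ^ (2*qq) := by
      intro qq
      rw [← Real.rpow_natCast (n:ℝ) 2, ← Real.rpow_mul hnpos.le]
      norm_num
    have hmain1 : (n:ℝ)^(2*m) * ((n:ℝ)^2) ^ (-((m:ℝ)+1/2)-1) = ((n:ℝ)^3)⁻¹ := by
      rw [hsq, ← Real.rpow_natCast (n:ℝ) (2*m), ← Real.rpow_add hnpos,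
        show ((2*m:ℕ):ℝ) + 2*(-((m:ℝ)+1/2)-1) = -3 by push_cast; ring,
        show (-3:ℝ) = -((3:ℕ):ℝ) by norm_num, Real.rpow_neg hnpos.le, Real.rpow_natCast]
    have hmain2 : ((n:ℝ)^2) ^ (-((1:ℝ)/2)-1) = ((n:ℝ)^3)⁻¹ := by
      rw [hsq, show 2*(-((1:ℝ)/2)-1) = (-3:ℝ) by ring,
        show (-3:ℝ) = -((3:ℕ):ℝ) by norm_num, Real.rpow_neg hnpos.le, Real.rpow_natCast]
    -- assemble
    rw [hsplit]
    have habs3 : |(∫ x in Ioo (0:ℝ) a,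
          Real.log (1 + Real.exp (-s - (n:ℝ) ^ (2*m) * Q x)) / Real.sqrt (x * (a - x)))
        - ((∫ x in Ioo (0:ℝ) a, (Real.sqrt (a*x))⁻¹ * G s (t * (n:ℝ)^(2*m) * x ^ m))
          + ∫ x in Ici a, (Real.sqrt (a*x))⁻¹ * G s (t * (n:ℝ)^(2*m) * x ^ m))|
        ≤ |(∫ x in Ioo (0:ℝ) a,
          Real.log (1 + Real.exp (-s - (n:ℝ) ^ (2*m) * Q x)) / Real.sqrt (x * (a - x)))
        - (∫ x in Ioo (0:ℝ) a, (Real.sqrt (a*x))⁻¹ * G s (t * (n:ℝ)^(2*m) * x ^ m))|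
          + |∫ x in Ici a, (Real.sqrt (a*x))⁻¹ * G s (t * (n:ℝ)^(2*m) * x ^ m)| := by
      rw [sub_add_eq_sub_sub]
      exact (abs_sub_le _ 0 _).trans (le_of_eq (by rw [sub_zero, zero_sub, abs_neg]))
    have hfinal : E₀ * ((n:ℝ)^(2*m) * (K₁ * (((n:ℝ)^2) ^ (-((m:ℝ)+1/2)-1) * A₁))
          + K₂ * (((n:ℝ)^2) ^ (-((1:ℝ)/2)-1) * A₂) + K₃ * εn * B₃) + E₀ * εn / a * A₃
        ≤ (1 + E₀ * (K₁*A₁ + K₂*A₂ + (K₃*B₃ + A₃/a) * (27/c₀^3))) / (n:ℝ)^3 := by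
      have hi30 : (0:ℝ) ≤ ((n:ℝ)^3)⁻¹ := by positivity
      have e1 : (n:ℝ)^(2*m) * (K₁ * (((n:ℝ)^2) ^ (-((m:ℝ)+1/2)-1) * A₁))
          = K₁*A₁*((n:ℝ)^3)⁻¹ := by
        rw [← hmain1]; ring
      have e2 : K₂ * (((n:ℝ)^2) ^ (-((1:ℝ)/2)-1) * A₂) = K₂*A₂*((n:ℝ)^3)⁻¹ := by
        rw [hmain2]; ring
      have hb3 : K₃ * εn * B₃ ≤ K₃*(27/c₀^3*((n:ℝ)^3)⁻¹)*B₃ :=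
        mul_le_mul_of_nonneg_right (mul_le_mul_of_nonneg_left hεbound hK₃0) hB₃0
      have hb4 : E₀ * εn / a * A₃ ≤ E₀*(27/c₀^3*((n:ℝ)^3)⁻¹)/a*A₃ := by
        have eL : E₀ * εn / a * A₃ = (E₀*εn)*(a⁻¹*A₃) := by ring
        have eR : E₀*(27/c₀^3*((n:ℝ)^3)⁻¹)/a*A₃ = (E₀*(27/c₀^3*((n:ℝ)^3)⁻¹))*(a⁻¹*A₃) := by ring
        rw [eL, eR]
        apply mul_le_mul_of_nonneg_right (mul_le_mul_of_nonneg_left hεbound hE₀pos.le)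
        exact mul_nonneg (by positivity) hA₃0
      have emid : E₀ * (K₁*A₁*((n:ℝ)^3)⁻¹ + K₂*A₂*((n:ℝ)^3)⁻¹ + K₃*(27/c₀^3*((n:ℝ)^3)⁻¹)*B₃)
            + E₀*(27/c₀^3*((n:ℝ)^3)⁻¹)/a*A₃
          = E₀ * (K₁*A₁ + K₂*A₂ + (K₃*B₃ + A₃/a) * (27/c₀^3)) * ((n:ℝ)^3)⁻¹ := by
        ring
      have elast : E₀ * (K₁*A₁ + K₂*A₂ + (K₃*B₃ + A₃/a) * (27/c₀^3)) * ((n:ℝ)^3)⁻¹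
          ≤ (1 + E₀ * (K₁*A₁ + K₂*A₂ + (K₃*B₃ + A₃/a) * (27/c₀^3))) * ((n:ℝ)^3)⁻¹ := by
        apply mul_le_mul_of_nonneg_right ?_ hi30
        linarith
      have hdiv : (1 + E₀ * (K₁*A₁ + K₂*A₂ + (K₃*B₃ + A₃/a) * (27/c₀^3))) / (n:ℝ)^3
          = (1 + E₀ * (K₁*A₁ + K₂*A₂ + (K₃*B₃ + A₃/a) * (27/c₀^3))) * ((n:ℝ)^3)⁻¹ :=
        div_eq_mul_inv _ _
      rw [e1, e2, hdiv]
      have hmono : E₀ * (K₁*A₁*((n:ℝ)^3)⁻¹ + K₂*A₂*((n:ℝ)^3)⁻¹ + K₃*εn*B₃)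
          ≤ E₀ * (K₁*A₁*((n:ℝ)^3)⁻¹ + K₂*A₂*((n:ℝ)^3)⁻¹ + K₃*(27/c₀^3*((n:ℝ)^3)⁻¹)*B₃) :=
        mul_le_mul_of_nonneg_left (by linarith) hE₀pos.le
      linarith
    calc |(∫ x in Ioo (0:ℝ) a,
          Real.log (1 + Real.exp (-s - (n:ℝ) ^ (2*m) * Q x)) / Real.sqrt (x * (a - x)))
        - ((∫ x in Ioo (0:ℝ) a, (Real.sqrt (a*x))⁻¹ * G s (t * (n:ℝ)^(2*m) * x ^ m))
          + ∫ x in Ici a, (Real.sqrt (a*x))⁻¹ * G s (t * (n:ℝ)^(2*m) * x ^ m))|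
        ≤ |(∫ x in Ioo (0:ℝ) a,
          Real.log (1 + Real.exp (-s - (n:ℝ) ^ (2*m) * Q x)) / Real.sqrt (x * (a - x)))
        - (∫ x in Ioo (0:ℝ) a, (Real.sqrt (a*x))⁻¹ * G s (t * (n:ℝ)^(2*m) * x ^ m))|
          + |∫ x in Ici a, (Real.sqrt (a*x))⁻¹ * G s (t * (n:ℝ)^(2*m) * x ^ m)| := habs3
      _ ≤ (E₀ * ((n:ℝ)^(2*m) * (K₁ * (((n:ℝ)^2) ^ (-((m:ℝ)+1/2)-1) * A₁))
          + K₂ * (((n:ℝ)^2) ^ (-((1:ℝ)/2)-1) * A₂) + K₃ * εn * B₃)) + E₀ * εn / a * A₃ :=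
          add_le_add (le_trans hE1 hHval) htail
      _ ≤ (1 + E₀ * (K₁*A₁ + K₂*A₂ + (K₃*B₃ + A₃/a) * (27/c₀^3))) / (n:ℝ)^3 := hfinal
  calc |1/(2*Real.pi)| * |_ - _| ≤ 1 * |_ - _| := mul_le_mul_of_nonneg_right h2π (abs_nonneg _)
    _ = _ := one_mul _
    _ ≤ _ := main_est
end
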